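/- arXiv:1312.6979 — 4 statements merged into one kernel-verified Lean document; each statement's English description precedes it below -/
import Mathlib

section
/- There exists a constant C < ∞ such that for every ε with 0 < ε ≤ 1/3, every α ∈ I, and every p₃ ∈ [0,1), one has ∫_{[0,1)²} 1/|e₂D(p) − (α − 3 + cos(2πp₃)) − iε| dp ≤ C·|log ε|². -/
open MeasureTheory Real

/-- The two-dimensional dispersion `e₂D(p) = -cos(2πp₁) - cos(2πp₂)`. -/
noncomputable def disp2D (p : Fin 2 → ℝ) : ℝ := -∑ i, Real.cos (2 * Real.pi * p i)

/-- The boundary of the rectangle in `ℂ` with vertices `-1, 7, 7-i, -1-i`. -/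
def RectI : Set ℂ := {α | -1 ≤ α.re ∧ α.re ≤ 7 ∧ -1 ≤ α.im ∧ α.im ≤ 0 ∧
  (α.re = -1 ∨ α.re = 7 ∨ α.im = -1 ∨ α.im = 0)}

/-- The fundamental domain `[0,1)²` of the two-dimensional torus. -/
def box2 : Set (Fin 2 → ℝ) := Set.univ.pi fun _ => Set.Ico (0 : ℝ) 1

open Set intervalIntegral

/-- Jordan-type lower bound: `sin s ≥ (2/π) min(s, π−s)` for `s ∈ [0,π]`. -/
lemma sin_lb {s : ℝ} (h0 : 0 ≤ s) (h1 : s ≤ π) : 2/π * min s (π - s) ≤ Real.sin s := by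
  rcases le_total s (π/2) with h | h
  · calc 2/π * min s (π - s) ≤ 2/π * s := by
          apply mul_le_mul_of_nonneg_left (min_le_left _ _)
          positivity
      _ ≤ Real.sin s := Real.mul_le_sin h0 h
  · have h2 : 0 ≤ π - s := by linarith
    have h3 : π - s ≤ π/2 := by linarith
    calc 2/π * min s (π - s) ≤ 2/π * (π - s) := by
          apply mul_le_mul_of_nonneg_left (min_le_right _ _)
          positivity
      _ ≤ Real.sin (π - s) := Real.mul_le_sin h2 h3
      _ = Real.sin s := Real.sin_pi_sub s

lemma cos_key {a b : ℝ} (ha0 : 0 ≤ a) (ha : a ≤ π) (hb0 : 0 ≤ b) (hb : b ≤ π) :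
    2/π^2 * (|a - b| * max |a - b| (min b (π - b))) ≤ |Real.cos a - Real.cos b| := by
  have hπ : (0:ℝ) < π := Real.pi_pos
  set s := (a + b)/2 with hs_def
  set t := (a - b)/2 with ht_def
  have hs0 : 0 ≤ s := by positivity
  have hs1 : s ≤ π := by rw [hs_def]; linarith
  have hsin_s : 0 ≤ Real.sin s := Real.sin_nonneg_of_nonneg_of_le_pi hs0 hs1
  -- |sin t| ≥ (2/π)|t|
  have ht2 : |t| ≤ π/2 := by
    rw [abs_le]; constructor <;> [skip; skip] <;> rw [ht_def] <;> [linarith; linarith]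
  have hsin_t : 2/π * |t| ≤ |Real.sin t| := by
    rcases le_total 0 t with h | h
    · rw [abs_of_nonneg h, abs_of_nonneg (Real.sin_nonneg_of_nonneg_of_le_pi h (by linarith [ht2, abs_of_nonneg h]))]
      exact Real.mul_le_sin h (by rwa [abs_of_nonneg h] at ht2)
    · have h' : 0 ≤ -t := by linarith
      rw [abs_of_nonpos h, abs_of_nonpos (Real.sin_nonpos_of_nonpos_of_neg_pi_le h (by linarith [hπ]))]
      rw [← Real.sin_neg]
      exact Real.mul_le_sin h' (by rwa [abs_of_nonpos h] at ht2)
  -- sin s ≥ (2/π)·(max |a-b| (min b (π-b)))/2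
  have hmin : max |a - b| (min b (π - b)) / 2 ≤ min s (π - s) := by
    have hab : |a - b| ≤ 2 * s := by
      rw [abs_le]; constructor <;> rw [hs_def] <;> linarith
    have hab' : |a - b| ≤ 2 * (π - s) := by
      rw [abs_le]; constructor <;> rw [hs_def] <;> linarith
    have h1 : min b (π - b) ≤ 2 * s := by
      calc min b (π - b) ≤ b := min_le_left _ _
        _ ≤ 2 * s := by rw [hs_def]; linarith
    have h2 : min b (π - b) ≤ 2 * (π - s) := by
      calc min b (π - b) ≤ π - b := min_le_right _ _
        _ ≤ 2 * (π - s) := by rw [hs_def]; linarith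
    rw [div_le_iff₀ (by norm_num : (0:ℝ) < 2)]
    rcases max_cases |a - b| (min b (π - b)) with ⟨hm, _⟩ | ⟨hm, _⟩ <;> rw [hm] <;>
      rcases min_cases s (π - s) with ⟨hm2, _⟩ | ⟨hm2, _⟩ <;> rw [hm2] <;> linarith
  have hsin_s' : 2/π * (max |a - b| (min b (π - b)) / 2) ≤ Real.sin s :=
    le_trans (mul_le_mul_of_nonneg_left hmin (by positivity)) (sin_lb hs0 hs1)
  have key : Real.cos a - Real.cos b = -2 * Real.sin s * Real.sin t := Real.cos_sub_cos a b
  have habs : |Real.cos a - Real.cos b| = 2 * Real.sin s * |Real.sin t| := by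
    rw [key, abs_mul, abs_mul, abs_of_nonneg hsin_s]
    norm_num
  rw [habs]
  have habt : |a - b| = 2 * |t| := by
    rw [ht_def, abs_div, abs_two]; ring
  calc 2/π^2 * (|a - b| * max |a - b| (min b (π - b)))
      = 2 * (2/π * (max |a - b| (min b (π - b)) / 2)) * (2/π * |t|) := by
        rw [habt]; field_simp
    _ ≤ 2 * Real.sin s * |Real.sin t| := by
        apply mul_le_mul _ hsin_t (by positivity) (by positivity)
        apply mul_le_mul_of_nonneg_left hsin_s' (by norm_num)

/-- Version in `y`-coordinates on the half-period `[0,1/2]`. -/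
lemma cos_y_key {y m : ℝ} (hy : y ∈ Icc (0:ℝ) (1/2)) (hm : m ∈ Icc (0:ℝ) (1/2)) :
    8 * (|y - m| * max |y - m| (min m (1/2 - m))) ≤ |Real.cos (2*π*y) - Real.cos (2*π*m)| := by
  have hπ : (0:ℝ) < π := Real.pi_pos
  obtain ⟨hy0, hy1⟩ := hy
  obtain ⟨hm0, hm1⟩ := hm
  have h := cos_key (a := 2*π*y) (b := 2*π*m) (by positivity) (by nlinarith) (by positivity) (by nlinarith)
  have e1 : |2*π*y - 2*π*m| = 2*π*|y - m| := by
    rw [show 2*π*y - 2*π*m = 2*π*(y-m) by ring, abs_mul, abs_of_pos (by positivity : (0:ℝ) < 2*π)]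
  have e2 : min (2*π*m) (π - 2*π*m) = 2*π*min m (1/2 - m) := by
    rw [show π - 2*π*m = 2*π*(1/2 - m) by ring]
    rcases min_cases m (1/2 - m) with ⟨h1, h2⟩ | ⟨h1, h2⟩ <;> rw [h1] <;>
      [rw [min_eq_left (by nlinarith)]; rw [min_eq_right (by nlinarith)]]
  have e3 : max (2*π*|y-m|) (2*π*min m (1/2-m)) = 2*π*max |y-m| (min m (1/2-m)) := by
    rcases max_cases |y-m| (min m (1/2-m)) with ⟨h1, h2⟩ | ⟨h1, h2⟩ <;> rw [h1] <;>
      [rw [max_eq_left (by nlinarith)]; rw [max_eq_right (by nlinarith)]]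
  rw [e1, e2, e3] at h
  calc 8 * (|y - m| * max |y - m| (min m (1/2 - m)))
      = 2/π^2 * (2*π*|y-m| * (2*π*max |y-m| (min m (1/2-m)))) := by field_simp; ring
    _ ≤ _ := h

/-- Projection onto `[-1,1]` decreases distance from points of `[-1,1]`, with excess. -/
lemma clamp_abs (c t : ℝ) (ht : -1 ≤ t) (ht' : t ≤ 1) :
    |t - max (-1) (min 1 c)| + (max |c| 1 - 1) ≤ |t - c| := by
  rcases le_total c (-1) with h | h
  · have h1 : min 1 c = c := min_eq_right (by linarith)
    have h2 : max (-1:ℝ) c = -1 := max_eq_left h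
    have h3 : max |c| 1 = -c := by rw [abs_of_nonpos (by linarith)]; exact max_eq_left (by linarith)
    rw [h1, h2, h3, abs_of_nonneg (by linarith : (0:ℝ) ≤ t - (-1)), abs_of_nonneg (by linarith)]
    ring_nf; linarith
  rcases le_total 1 c with h' | h'
  · have h1 : min 1 c = 1 := min_eq_left h'
    have h2 : max (-1:ℝ) 1 = 1 := by norm_num
    have h3 : max |c| 1 = c := by rw [abs_of_nonneg (by linarith)]; exact max_eq_left h'
    rw [h1, h2, h3, abs_of_nonpos (by linarith : t - 1 ≤ 0), abs_of_nonpos (by linarith)]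
    ring_nf; linarith
  · have h1 : min 1 c = c := min_eq_right h'
    have h2 : max (-1:ℝ) c = c := max_eq_right h
    have h3 : max |c| 1 = 1 := max_eq_right (abs_le.2 ⟨h, h'⟩)
    rw [h1, h2, h3]; simp

/-- Master comparison lemma: to bound `∫_{[0,1)} f`, compare with an even-type
profile `φ` centered at `m₁` on `[0,1/2]` and `m₂` on `[1/2,1]`. -/
lemma master {f φ : ℝ → ℝ} (hf : Continuous f) (hφ : Continuous φ)
    (hf0 : ∀ y, 0 ≤ f y) (hφ0 : ∀ u, 0 ≤ φ u)
    {m₁ m₂ : ℝ} (hm₁ : m₁ ∈ Icc (0:ℝ) 1) (hm₂ : m₂ ∈ Icc (0:ℝ) 1)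
    (h₁ : ∀ y ∈ Icc (0:ℝ) (1/2), f y ≤ φ (y - m₁))
    (h₂ : ∀ y ∈ Icc (1/2:ℝ) 1, f y ≤ φ (y - m₂))
    {B : ℝ} (hB : ∫ u in (-1:ℝ)..1, φ u ≤ B) :
    ∫ y in Ico (0:ℝ) 1, f y ≤ 2 * B := by
  have step0 : ∫ y in Ico (0:ℝ) 1, f y = ∫ y in (0:ℝ)..1, f y := by
    rw [intervalIntegral.integral_of_le (by norm_num : (0:ℝ) ≤ 1)]
    exact setIntegral_congr_set Ico_ae_eq_Ioc
  have hint : ∀ m : ℝ, IntervalIntegrable (fun y => φ (y - m)) volume 0 1 :=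
    fun m => (hφ.comp (continuous_id.sub continuous_const)).intervalIntegrable 0 1
  have step1 : ∫ y in (0:ℝ)..1, f y ≤ ∫ y in (0:ℝ)..1, (φ (y - m₁) + φ (y - m₂)) := by
    apply intervalIntegral.integral_mono_on (by norm_num) (hf.intervalIntegrable 0 1)
      ((hint m₁).add (hint m₂))
    intro y hy
    rcases le_total y (1/2) with h | h
    · exact le_trans (h₁ y ⟨hy.1, h⟩) (le_add_of_nonneg_right (hφ0 _))
    · exact le_trans (h₂ y ⟨h, hy.2⟩) (le_add_of_nonneg_left (hφ0 _))
  have step2 : ∀ m : ℝ, m ∈ Icc (0:ℝ) 1 → ∫ y in (0:ℝ)..1, φ (y - m) ≤ ∫ u in (-1:ℝ)..1, φ u := by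
    intro m hm
    rw [intervalIntegral.integral_comp_sub_right φ m]
    have hφi : ∀ a b : ℝ, IntervalIntegrable φ volume a b := fun a b => hφ.intervalIntegrable a b
    have e1 : ∫ u in (-1:ℝ)..1, φ u =
        (∫ u in (-1:ℝ)..(0 - m), φ u) + (∫ u in (0 - m)..(1 - m), φ u) + (∫ u in (1 - m)..(1:ℝ), φ u) := by
      rw [intervalIntegral.integral_add_adjacent_intervals (hφi _ _) (hφi _ _),
        intervalIntegral.integral_add_adjacent_intervals (hφi _ _) (hφi _ _)]
    have p1 : 0 ≤ ∫ u in (-1:ℝ)..(0 - m), φ u :=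
      intervalIntegral.integral_nonneg (by simp; linarith [hm.2]) (fun u _ => hφ0 u)
    have p2 : 0 ≤ ∫ u in (1 - m)..(1:ℝ), φ u :=
      intervalIntegral.integral_nonneg (by linarith [hm.1]) (fun u _ => hφ0 u)
    linarith [e1]
  have step3 : ∫ y in (0:ℝ)..1, (φ (y - m₁) + φ (y - m₂)) =
      (∫ y in (0:ℝ)..1, φ (y - m₁)) + ∫ y in (0:ℝ)..1, φ (y - m₂) :=
    intervalIntegral.integral_add (hint m₁) (hint m₂)
  calc ∫ y in Ico (0:ℝ) 1, f y ≤ (∫ y in (0:ℝ)..1, φ (y - m₁)) + ∫ y in (0:ℝ)..1, φ (y - m₂) := by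
        rw [step0]; rw [step3] at step1; exact step1
    _ ≤ B + B := add_le_add (le_trans (step2 m₁ hm₁) hB) (le_trans (step2 m₂ hm₂) hB)
    _ = 2 * B := by ring

/-- `∫_{-1}^{1} du/(r+|u|) = 2 log((r+1)/r)`. -/
lemma intA {r : ℝ} (hr : 0 < r) :
    ∫ u in (-1:ℝ)..1, 1/(r + |u|) = 2 * Real.log ((r+1)/r) := by
  have hint : ∀ a b : ℝ, IntervalIntegrable (fun u => 1/(r + |u|)) volume a b := by
    intro a b
    apply Continuous.intervalIntegrable
    apply Continuous.div continuous_const (continuous_const.add continuous_abs)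
    intro x; show r + |x| ≠ 0; positivity
  have key : ∫ u in (0:ℝ)..1, 1/(r + u) = Real.log ((r+1)/r) := by
    have : ∫ u in (0:ℝ)..1, 1/(r + u) = ∫ x in (r+0)..(r+1), 1/x := by
      rw [← intervalIntegral.integral_comp_add_left (fun x => 1/x) r]
    rw [this, integral_one_div]
    · norm_num
    · intro hx
      rw [Set.uIcc_of_le (by linarith)] at hx
      have := hx.1; norm_num at this; linarith
  have e1 : ∫ u in (0:ℝ)..1, 1/(r + |u|) = Real.log ((r+1)/r) := by
    rw [← key]
    apply intervalIntegral.integral_congr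
    intro u hu
    rw [Set.uIcc_of_le (by norm_num : (0:ℝ) ≤ 1)] at hu
    show 1/(r + |u|) = 1/(r + u)
    rw [abs_of_nonneg hu.1]
  have e2 : ∫ u in (-1:ℝ)..0, 1/(r + |u|) = Real.log ((r+1)/r) := by
    have h := intervalIntegral.integral_comp_neg (a := (-1:ℝ)) (b := 0) (fun u => 1/(r + |u|))
    simp only [abs_neg, neg_zero, neg_neg] at h
    rw [h, e1]
  calc ∫ u in (-1:ℝ)..1, 1/(r + |u|)
      = (∫ u in (-1:ℝ)..0, 1/(r + |u|)) + ∫ u in (0:ℝ)..1, 1/(r + |u|) :=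
        (intervalIntegral.integral_add_adjacent_intervals (hint _ _) (hint _ _)).symm
    _ = 2 * Real.log ((r+1)/r) := by rw [e1, e2]; ring

/-- `∫_{-1}^{1} du/(M + 8u²) ≤ 2/√M`. -/
lemma intB {M : ℝ} (hM : 0 < M) :
    ∫ u in (-1:ℝ)..1, 1/(M + 8*u^2) ≤ 2/Real.sqrt M := by
  set s := Real.sqrt (M/8) with hs_def
  have hs : 0 < s := Real.sqrt_pos.2 (by linarith)
  have hs2 : s^2 = M/8 := Real.sq_sqrt (by linarith)
  have e0 : ∀ u : ℝ, 1/(M + 8*u^2) = 1/8 * (1/s^2 * (1/(1 + (u/s)^2))) := by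
    intro u
    field_simp
    rw [hs2]; ring
  rw [intervalIntegral.integral_congr (g := fun u => 1/8 * (1/s^2 * (1/(1 + (u/s)^2))))
    (fun u _ => e0 u)]
  rw [intervalIntegral.integral_const_mul, intervalIntegral.integral_const_mul]
  have e1 : ∫ u in (-1:ℝ)..1, 1/(1 + (u/s)^2) = s * (Real.arctan (1/s) - Real.arctan (-1/s)) := by
    rw [intervalIntegral.integral_comp_div (f := fun x => 1/(1 + x^2)) (ne_of_gt hs),
      integral_one_div_one_add_sq]
    simp [smul_eq_mul]
  rw [e1]
  have harc : Real.arctan (1/s) - Real.arctan (-1/s) ≤ π := by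
    have h1 := Real.arctan_lt_pi_div_two (1/s)
    have h2 := Real.neg_pi_div_two_lt_arctan (-1/s)
    linarith
  have hsqrtM : Real.sqrt M = Real.sqrt 8 * s := by
    rw [hs_def, ← Real.sqrt_mul (by norm_num : (0:ℝ) ≤ 8)]
    norm_num [mul_div_cancel₀]
  calc (1:ℝ)/8 * (1/s^2 * (s * (Real.arctan (1/s) - Real.arctan (-1/s))))
      ≤ 1/8 * (1/s^2 * (s * π)) := by
        apply mul_le_mul_of_nonneg_left _ (by norm_num)
        apply mul_le_mul_of_nonneg_left _ (by positivity)
        exact mul_le_mul_of_nonneg_left harc (le_of_lt hs)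
    _ = π/(8*s) := by field_simp
    _ ≤ 2/Real.sqrt M := by
        rw [hsqrtM, div_le_div_iff₀ (by positivity) (by positivity)]
        have hpi : π ≤ 4 := by linarith [Real.pi_le_four]
        have h8 : Real.sqrt 8 ≤ 3 := by
          rw [show (3:ℝ) = Real.sqrt 9 by
            rw [show (9:ℝ) = 3^2 by norm_num, Real.sqrt_sq (by norm_num : (0:ℝ) ≤ 3)]]
          exact Real.sqrt_le_sqrt (by norm_num)
        have h8' : (0:ℝ) ≤ Real.sqrt 8 := Real.sqrt_nonneg 8
        nlinarith [mul_le_mul_of_nonneg_right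
          (mul_le_mul hpi h8 h8' (by norm_num : (0:ℝ) ≤ 4)) hs.le, hs.le]

lemma sqrt_subadd {x y : ℝ} (hx : 0 ≤ x) (hy : 0 ≤ y) :
    Real.sqrt (x + y) ≤ Real.sqrt x + Real.sqrt y := by
  rw [show Real.sqrt x + Real.sqrt y
      = Real.sqrt ((Real.sqrt x + Real.sqrt y)^2) by
    rw [Real.sqrt_sq (by positivity)]]
  apply Real.sqrt_le_sqrt
  nlinarith [Real.sq_sqrt hx, Real.sq_sqrt hy, Real.sqrt_nonneg x, Real.sqrt_nonneg y]

lemma cos_period (y : ℝ) : Real.cos (2*π*(1-y)) = Real.cos (2*π*y) := by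
  rw [show 2*π*(1-y) = 2*π - 2*π*y by ring, Real.cos_two_pi_sub]

/-- Scaffolding: for any `c` there is a center `m ∈ [0,1/2]` so that on `[0,1/2]`
the distance `|cos(2πy) − c|` dominates the basic quadratic/linear profile. -/
lemma cos_dist_lb (c : ℝ) : ∃ m : ℝ, m ∈ Icc (0:ℝ) (1/2) ∧
    (∀ y ∈ Icc (0:ℝ) (1/2),
      8 * (|y - m| * max |y - m| (min m (1/2 - m))) + (max |c| 1 - 1)
        ≤ |Real.cos (2*π*y) - c|) ∧
    max (-1) (min 1 c) = Real.cos (2*π*m) := by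
  have hπ := Real.pi_pos
  set cl := max (-1) (min 1 c) with hcl_def
  have hcl1 : -1 ≤ cl := le_max_left _ _
  have hcl2 : cl ≤ 1 := max_le (by norm_num) (min_le_left _ _)
  refine ⟨Real.arccos cl / (2*π), ⟨div_nonneg (Real.arccos_nonneg cl) (by positivity), ?_⟩, ?_, ?_⟩
  · rw [div_le_iff₀ (by positivity)]
    calc Real.arccos cl ≤ π := Real.arccos_le_pi cl
      _ = 1/2 * (2*π) := by ring
  · intro y hy
    have hmem : Real.arccos cl / (2*π) ∈ Icc (0:ℝ) (1/2) := by
      constructor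
      · exact div_nonneg (Real.arccos_nonneg cl) (by positivity)
      · rw [div_le_iff₀ (by positivity)]
        calc Real.arccos cl ≤ π := Real.arccos_le_pi cl
          _ = 1/2 * (2*π) := by ring
    have h1 := cos_y_key hy hmem
    have hcos : Real.cos (2*π*(Real.arccos cl / (2*π))) = cl := by
      rw [show 2*π*(Real.arccos cl / (2*π)) = Real.arccos cl by field_simp]
      exact Real.cos_arccos hcl1 hcl2
    rw [hcos] at h1
    have h2 := clamp_abs c (Real.cos (2*π*y)) (Real.neg_one_le_cos _) (Real.cos_le_one _)
    rw [← hcl_def] at h2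
    have : |Real.cos (2*π*y) - cl| ≤ |Real.cos (2*π*y) - c| - (max |c| 1 - 1) := by linarith
    linarith
  · rw [show 2*π*(Real.arccos cl / (2*π)) = Real.arccos cl by field_simp]
    exact (Real.cos_arccos hcl1 hcl2).symm

/-- The 1D square-root estimate. -/
lemma lem_sqrt {ε : ℝ} (hε : 0 < ε) (hε1 : ε ≤ 1) (c : ℝ) :
    ∫ y in Ico (0:ℝ) 1, 1/Real.sqrt (ε + |Real.cos (2*π*y) - c|)
      ≤ 20 * (1 + Real.log (1/ε)) := by
  obtain ⟨m, hm, hkey, -⟩ := cos_dist_lb c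
  have hπ := Real.pi_pos
  have hX : 0 ≤ Real.log (1/ε) := Real.log_nonneg (by rw [le_div_iff₀ hε]; linarith)
  -- the integrand and the comparison profile
  set f : ℝ → ℝ := fun y => 1/Real.sqrt (ε + |Real.cos (2*π*y) - c|) with hf_def
  set φ : ℝ → ℝ := fun u => 2/(Real.sqrt ε + Real.sqrt 8 * |u|) with hφ_def
  have hden : ∀ y, 0 < ε + |Real.cos (2*π*y) - c| := fun y => by positivity
  have hfc : Continuous f := by
    apply Continuous.div continuous_const
    · apply Real.continuous_sqrt.comp
      exact continuous_const.add (continuous_abs.comp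
        ((Real.continuous_cos.comp (continuous_const.mul continuous_id)).sub continuous_const))
    · intro y
      exact ne_of_gt (Real.sqrt_pos.2 (hden y))
  have hφc : Continuous φ := by
    apply Continuous.div continuous_const
    · exact continuous_const.add (continuous_const.mul continuous_abs)
    · intro u
      have : 0 < Real.sqrt ε := Real.sqrt_pos.2 hε
      have h8 : 0 ≤ Real.sqrt 8 * |u| := by positivity
      positivity
  have hf0 : ∀ y, 0 ≤ f y := fun y => by
    simp only [hf_def]; positivity
  have hφ0 : ∀ u, 0 ≤ φ u := fun u => by
    have : 0 < Real.sqrt ε := Real.sqrt_pos.2 hε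
    simp only [hφ_def]; positivity
  -- pointwise comparison
  have hquad : ∀ y ∈ Icc (0:ℝ) (1/2), 8*(y-m)^2 ≤ |Real.cos (2*π*y) - c| := by
    intro y hy
    have h := hkey y hy
    nlinarith [mul_nonneg (sub_nonneg.2 (le_max_left |y-m| (min m (1/2-m)))) (abs_nonneg (y-m)),
      sq_abs (y-m), le_max_right |c| 1]
  have hcomp : ∀ y ∈ Icc (0:ℝ) (1/2), f y ≤ φ (y - m) := by
    intro y hy
    have h5 := hquad y hy
    have e8 : Real.sqrt 8 * |y-m| = Real.sqrt (8*(y-m)^2) := by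
      rw [Real.sqrt_mul (by norm_num : (0:ℝ) ≤ 8), Real.sqrt_sq_eq_abs]
    have s1 : Real.sqrt ε ≤ Real.sqrt (ε + |Real.cos (2*π*y) - c|) :=
      Real.sqrt_le_sqrt (le_add_of_nonneg_right (abs_nonneg _))
    have s2 : Real.sqrt (8*(y-m)^2) ≤ Real.sqrt (ε + |Real.cos (2*π*y) - c|) :=
      Real.sqrt_le_sqrt (by linarith)
    show 1/Real.sqrt (ε + |Real.cos (2*π*y) - c|) ≤ 2/(Real.sqrt ε + Real.sqrt 8 * |y-m|)
    rw [div_le_div_iff₀ (Real.sqrt_pos.2 (hden y)) (by positivity)]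
    rw [e8]
    linarith
  have hcomp2 : ∀ y ∈ Icc (1/2:ℝ) 1, f y ≤ φ (y - (1 - m)) := by
    intro y hy
    have hy' : 1 - y ∈ Icc (0:ℝ) (1/2) := ⟨by linarith [hy.2], by linarith [hy.1]⟩
    have h := hcomp (1-y) hy'
    have e1 : f (1-y) = f y := by
      simp only [hf_def, cos_period]
    have e2 : φ ((1-y) - m) = φ (y - (1-m)) := by
      simp only [hφ_def]
      rw [show (1-y) - m = -(y - (1-m)) by ring, abs_neg]
    rw [e1, e2] at h
    exact h
  -- the integral of the profile
  have hB : ∫ u in (-1:ℝ)..1, φ u ≤ 10 * (1 + Real.log (1/ε)) := by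
    set r := Real.sqrt (ε/8) with hr_def
    have hr : 0 < r := Real.sqrt_pos.2 (by positivity)
    have h8pos : (0:ℝ) < Real.sqrt 8 := Real.sqrt_pos.2 (by norm_num)
    have h8r : Real.sqrt 8 * r = Real.sqrt ε := by
      rw [hr_def, ← Real.sqrt_mul (by norm_num : (0:ℝ) ≤ 8)]
      norm_num
      field_simp
    have hφeq : ∀ u : ℝ, φ u = (2/Real.sqrt 8) * (1/(r + |u|)) := by
      intro u
      simp only [hφ_def]
      rw [← h8r]
      rw [div_mul_div_comm]
      congr 1
      · ring
      · ring
    rw [intervalIntegral.integral_congr (g := fun u => (2/Real.sqrt 8) * (1/(r + |u|)))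
      (fun u _ => hφeq u), intervalIntegral.integral_const_mul, intA hr]
    -- bound (2/√8)·2·log((r+1)/r)
    have hr1 : r ≤ 1 := by
      rw [hr_def, show (1:ℝ) = Real.sqrt 1 by rw [Real.sqrt_one]]
      exact Real.sqrt_le_sqrt (by linarith)
    have hlog_pos : 0 ≤ Real.log ((r+1)/r) :=
      Real.log_nonneg (by rw [le_div_iff₀ hr]; linarith)
    have hlogr : Real.log r = (Real.log ε - Real.log 8) / 2 := by
      rw [hr_def, Real.log_sqrt (by positivity), Real.log_div (ne_of_gt hε) (by norm_num)]
    have hlog8 : Real.log 8 ≤ 7 := by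
      linarith [Real.log_le_sub_one_of_pos (by norm_num : (0:ℝ) < 8)]
    have hlog8' : 0 ≤ Real.log 8 := Real.log_nonneg (by norm_num)
    have hinv : Real.log (1/ε) = - Real.log ε := by
      rw [one_div, Real.log_inv]
    have hlog_ub : Real.log ((r+1)/r) ≤ 5 * (1 + Real.log (1/ε)) := by
      rw [Real.log_div (by linarith) (ne_of_gt hr), hlogr]
      have h2 : Real.log (r+1) ≤ Real.log 2 :=
        Real.log_le_log (by linarith) (by linarith)
      have h2' : Real.log 2 ≤ 0.7 := by linarith [Real.log_two_lt_d9]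
      have hX' : 0 ≤ -Real.log ε := by rw [← hinv]; exact hX
      rw [hinv]
      linarith
    have hc8 : 2/Real.sqrt 8 ≤ 1 := by
      rw [div_le_one h8pos]
      rw [show (2:ℝ) = Real.sqrt 4 by
        rw [show (4:ℝ) = 2^2 by norm_num, Real.sqrt_sq (by norm_num : (0:ℝ) ≤ 2)]]
      exact Real.sqrt_le_sqrt (by norm_num)
    have hc8' : 0 ≤ 2/Real.sqrt 8 := by positivity
    calc 2/Real.sqrt 8 * (2 * Real.log ((r+1)/r)) ≤ 1 * (2 * Real.log ((r+1)/r)) := by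
          apply mul_le_mul_of_nonneg_right hc8 (by linarith)
      _ = 2 * Real.log ((r+1)/r) := by ring
      _ ≤ 2 * (5 * (1 + Real.log (1/ε))) := by linarith
      _ = 10 * (1 + Real.log (1/ε)) := by ring
  have hm1 : m ∈ Icc (0:ℝ) 1 := ⟨hm.1, by linarith [hm.2]⟩
  have hm2 : 1 - m ∈ Icc (0:ℝ) 1 := ⟨by linarith [hm.2], by linarith [hm.1]⟩
  have := master hfc hφc hf0 hφ0 hm1 hm2 hcomp hcomp2 hB
  linarith

set_option maxHeartbeats 2000000 in
/-- The 1D linear estimate with singularity weight. -/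
lemma lem_lin {ε : ℝ} (hε : 0 < ε) (hε1 : ε ≤ 1) (c : ℝ) :
    ∫ y in Ico (0:ℝ) 1, 1/(ε + |Real.cos (2*π*y) - c|)
      ≤ 60 * (1 + Real.log (1/ε)) / Real.sqrt (ε + abs (1 - abs c)) := by
  obtain ⟨m, hm, hkey, hclm⟩ := cos_dist_lb c
  have hπ := Real.pi_pos
  have hX : 0 ≤ Real.log (1/ε) := Real.log_nonneg (by rw [le_div_iff₀ hε]; linarith)
  set L := 1 + Real.log (1/ε) with hL_def
  have hL1 : 1 ≤ L := by rw [hL_def]; linarith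
  set d := min m (1/2 - m) with hd_def
  set e := max |c| 1 - 1 with he_def
  have he0 : 0 ≤ e := by rw [he_def]; linarith [le_max_right |c| 1]
  have hd0 : 0 ≤ d := le_min hm.1 (by linarith [hm.2])
  have hd12 : d ≤ 1/2 := le_trans (min_le_right _ _) (by linarith [hm.1])
  set f : ℝ → ℝ := fun y => 1/(ε + |Real.cos (2*π*y) - c|) with hf_def
  have hden : ∀ y, 0 < ε + |Real.cos (2*π*y) - c| := fun y => by positivity
  have hfc : Continuous f := by
    apply Continuous.div continuous_const
    · exact continuous_const.add (continuous_abs.comp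
        ((Real.continuous_cos.comp (continuous_const.mul continuous_id)).sub continuous_const))
    · exact fun y => ne_of_gt (hden y)
  have hf0 : ∀ y, 0 ≤ f y := fun y => by simp only [hf_def]; positivity
  have hm1 : m ∈ Icc (0:ℝ) 1 := ⟨hm.1, by linarith [hm.2]⟩
  have hm2 : 1 - m ∈ Icc (0:ℝ) 1 := ⟨by linarith [hm.2], by linarith [hm.1]⟩
  -- symmetric version of the key bound
  have hkey2 : ∀ y ∈ Icc (1/2:ℝ) 1,
      8 * (|y - (1-m)| * max |y - (1-m)| d) + e ≤ |Real.cos (2*π*y) - c| := by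
    intro y hy
    have hy' : 1 - y ∈ Icc (0:ℝ) (1/2) := ⟨by linarith [hy.2], by linarith [hy.1]⟩
    have h := hkey (1-y) hy'
    rw [cos_period] at h
    rw [show (1-y) - m = -(y - (1-m)) by ring, abs_neg] at h
    exact h
  -- Bound 1 : T ≤ 4/√(ε+e)
  have T1 : ∫ y in Ico (0:ℝ) 1, f y ≤ 4/Real.sqrt (ε + e) := by
    set φ : ℝ → ℝ := fun u => 1/((ε+e) + 8*u^2) with hφ_def
    have hMe : 0 < ε + e := by linarith
    have hφc : Continuous φ := by
      apply Continuous.div continuous_const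
      · exact continuous_const.add (continuous_const.mul (continuous_pow 2))
      · intro u; positivity
    have hφ0 : ∀ u, 0 ≤ φ u := fun u => by simp only [hφ_def]; positivity
    have hb : ∀ (y mm : ℝ), 8 * (|y - mm| * max |y - mm| d) + e ≤ |Real.cos (2*π*y) - c| →
        f y ≤ φ (y - mm) := by
      intro y mm h
      have h8 : 8*(y-mm)^2 + e ≤ |Real.cos (2*π*y) - c| := by
        nlinarith [mul_nonneg (sub_nonneg.2 (le_max_left |y-mm| d)) (abs_nonneg (y-mm)),
          sq_abs (y-mm)]
      apply one_div_le_one_div_of_le (by positivity)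
      linarith
    have hB := intB (M := ε + e) hMe
    have := master hfc hφc hf0 hφ0 hm1 hm2
      (fun y hy => hb y m (hkey y hy)) (fun y hy => hb y (1-m) (hkey2 y hy)) hB
    calc ∫ y in Ico (0:ℝ) 1, f y ≤ 2 * (2/Real.sqrt (ε+e)) := this
      _ = 4/Real.sqrt (ε+e) := by ring
  -- Bound 2 : for d > 0, T ≤ 2L/d
  have T2 : 0 < d → ∫ y in Ico (0:ℝ) 1, f y ≤ 2*L/d := by
    intro hd
    set φ : ℝ → ℝ := fun u => 1/(ε + 8*d*|u|) with hφ_def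
    have hφc : Continuous φ := by
      apply Continuous.div continuous_const
      · exact continuous_const.add (continuous_const.mul continuous_abs)
      · intro u
        have : 0 ≤ 8*d*|u| := by positivity
        positivity
    have hφ0 : ∀ u, 0 ≤ φ u := fun u => by
      have : 0 ≤ 8*d*|u| := by positivity
      simp only [hφ_def]; positivity
    have hb : ∀ (y mm : ℝ), 8 * (|y - mm| * max |y - mm| d) + e ≤ |Real.cos (2*π*y) - c| →
        f y ≤ φ (y - mm) := by
      intro y mm h
      have h8 : 8*d*|y-mm| + e ≤ |Real.cos (2*π*y) - c| := by
        nlinarith [mul_le_mul_of_nonneg_left (le_max_right |y-mm| d) (abs_nonneg (y-mm))]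
      apply one_div_le_one_div_of_le (by positivity)
      linarith
    -- integral of φ
    set r := ε/(8*d) with hr_def
    have hr : 0 < r := by positivity
    have hφeq : ∀ u : ℝ, φ u = (1/(8*d)) * (1/(r + |u|)) := by
      intro u
      simp only [hφ_def, hr_def]
      rw [div_mul_div_comm]
      congr 1
      · ring
      · field_simp
    have hB : ∫ u in (-1:ℝ)..1, φ u ≤ L/d := by
      rw [intervalIntegral.integral_congr (g := fun u => (1/(8*d)) * (1/(r + |u|)))
        (fun u _ => hφeq u), intervalIntegral.integral_const_mul, intA hr]
      have hlog : Real.log ((r+1)/r) ≤ 4*L := by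
        rcases le_total r 1 with h1 | h1
        · rw [Real.log_div (by linarith) (ne_of_gt hr)]
          have h2 : Real.log (r+1) ≤ Real.log 2 := Real.log_le_log (by linarith) (by linarith)
          have h2' : Real.log 2 ≤ 0.7 := by linarith [Real.log_two_lt_d9]
          have h3 : Real.log r = Real.log ε - Real.log (8*d) := by
            rw [hr_def, Real.log_div (ne_of_gt hε) (by positivity)]
          have h4 : Real.log (8*d) ≤ Real.log 4 := Real.log_le_log (by positivity) (by linarith)
          have h5 : Real.log 4 ≤ 2*0.7 := by
            rw [show (4:ℝ) = 2^2 by norm_num, Real.log_pow]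
            push_cast
            linarith [Real.log_two_lt_d9]
          have hinv : Real.log (1/ε) = - Real.log ε := by rw [one_div, Real.log_inv]
          have hX' : 0 ≤ -Real.log ε := by rw [← hinv]; exact hX
          have hLe : L = 1 + -Real.log ε := by rw [hL_def, hinv]
          rw [hLe]
          linarith
        · have h2 : (r+1)/r ≤ 2 := by
            rw [div_le_iff₀ hr]; linarith
          have h3 : Real.log ((r+1)/r) ≤ Real.log 2 := Real.log_le_log (by positivity) h2
          have h2' : Real.log 2 ≤ 0.7 := by linarith [Real.log_two_lt_d9]
          nlinarith
      have hlog0 : 0 ≤ Real.log ((r+1)/r) := Real.log_nonneg (by rw [le_div_iff₀ hr]; linarith)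
      calc (1/(8*d)) * (2 * Real.log ((r+1)/r)) ≤ (1/(8*d)) * (2 * (4*L)) := by
            apply mul_le_mul_of_nonneg_left _ (by positivity)
            linarith
        _ = L/d := by field_simp; ring
    have := master hfc hφc hf0 hφ0 hm1 hm2
      (fun y hy => hb y m (hkey y hy)) (fun y hy => hb y (1-m) (hkey2 y hy)) hB
    calc ∫ y in Ico (0:ℝ) 1, f y ≤ 2 * (L/d) := this
      _ = 2*L/d := by ring
  -- Combine
  rcases le_or_gt |c| 1 with hc | hc
  · -- |c| ≤ 1 : here e = 0 and c = cos(2πm)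
    have he : e = 0 := by simp [he_def, max_eq_right hc]
    have hc' : c = Real.cos (2*π*m) := by
      rw [← hclm]
      rcases abs_le.1 hc with ⟨h1, h2⟩
      rw [min_eq_right h2, max_eq_right h1]
    have habs : abs (1 - abs c) = 1 - |c| := abs_of_nonneg (by linarith)
    -- 1 - |c| ≤ 20 d²
    have hup : 1 - |c| ≤ 20 * d^2 := by
      have hπ2 : π^2 ≤ 10 := by nlinarith [Real.pi_lt_d2, Real.pi_pos]
      have b1 : 1 - c ≤ 2*π^2*m^2 := by
        have := Real.one_sub_sq_div_two_le_cos (x := 2*π*m)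
        rw [← hc'] at this
        nlinarith
      have b2 : 1 + c ≤ 2*π^2*(1/2-m)^2 := by
        have h := Real.one_sub_sq_div_two_le_cos (x := π - 2*π*m)
        rw [Real.cos_pi_sub, ← hc'] at h
        nlinarith
      have habs1 : 1 - |c| ≤ 1 - c := by linarith [le_abs_self c]
      have habs2 : 1 - |c| ≤ 1 + c := by linarith [neg_abs_le c]
      rcases min_cases m (1/2 - m) with ⟨h1, h2⟩ | ⟨h1, h2⟩
      · rw [hd_def, h1]; nlinarith
      · rw [hd_def, h1]; nlinarith
    rw [he] at T1
    rcases eq_or_lt_of_le hd0 with hd | hd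
    · -- d = 0 forces |c| = 1
      have hd' : d = 0 := hd.symm
      rw [hd'] at hup
      have hc1 : (1:ℝ) - |c| = 0 := by nlinarith
      rw [habs, hc1, add_zero]
      have hsε : 0 < Real.sqrt ε := Real.sqrt_pos.2 hε
      calc ∫ y in Ico (0:ℝ) 1, f y ≤ 4/Real.sqrt (ε+0) := T1
        _ = 4/Real.sqrt ε := by rw [add_zero]
        _ ≤ 60*L/Real.sqrt ε := by
            rw [div_le_div_iff₀ hsε hsε]
            nlinarith [mul_nonneg (by linarith : (0:ℝ) ≤ 60*L-4) hsε.le]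
    · have hT2 := T2 hd
      have hs : Real.sqrt (ε + abs (1 - abs c)) ≤ Real.sqrt ε + 5*d := by
        rw [habs]
        calc Real.sqrt (ε + (1-|c|)) ≤ Real.sqrt ε + Real.sqrt (1-|c|) :=
              sqrt_subadd hε.le (by linarith)
          _ ≤ Real.sqrt ε + 5*d := by
              have h1 : Real.sqrt (1-|c|) ≤ Real.sqrt (25*d^2) := Real.sqrt_le_sqrt (by nlinarith)
              have h25 : Real.sqrt (25*d^2) = 5*d := by
                rw [show (25:ℝ)*d^2 = (5*d)^2 by ring, Real.sqrt_sq (by positivity)]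
              linarith
      have hspos : 0 < Real.sqrt (ε + abs (1 - abs c)) := Real.sqrt_pos.2 (by positivity)
      rcases le_total (Real.sqrt ε) d with hcase | hcase
      · have h6 : Real.sqrt (ε + abs (1 - abs c)) ≤ 6*d := by linarith
        calc ∫ y in Ico (0:ℝ) 1, f y ≤ 2*L/d := hT2
          _ ≤ 60*L/Real.sqrt (ε + abs (1 - abs c)) := by
              rw [div_le_div_iff₀ hd hspos]
              nlinarith [mul_le_mul_of_nonneg_left h6 (by positivity : (0:ℝ) ≤ 2*L),
                mul_nonneg (by linarith : (0:ℝ) ≤ 48*L) hd0]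
      · have hsε : 0 < Real.sqrt ε := Real.sqrt_pos.2 hε
        have h6 : Real.sqrt (ε + abs (1 - abs c)) ≤ 6*Real.sqrt ε := by linarith
        calc ∫ y in Ico (0:ℝ) 1, f y ≤ 4/Real.sqrt (ε+0) := T1
          _ = 4/Real.sqrt ε := by rw [add_zero]
          _ ≤ 60*L/Real.sqrt (ε + abs (1 - abs c)) := by
              rw [div_le_div_iff₀ hsε hspos]
              nlinarith [mul_le_mul_of_nonneg_left h6 (by norm_num : (0:ℝ) ≤ 4),
                mul_nonneg (by linarith : (0:ℝ) ≤ 60*L-24) hsε.le]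
  · -- |c| > 1 : e = |1 - |c||
    have he : e = abs (1 - abs c) := by
      rw [he_def, abs_of_nonpos (show (1:ℝ) - |c| ≤ 0 by linarith), max_eq_left hc.le]
      ring
    rw [he] at T1
    have hspos : 0 < Real.sqrt (ε + abs (1 - abs c)) := Real.sqrt_pos.2 (by positivity)
    calc ∫ y in Ico (0:ℝ) 1, f y ≤ 4/Real.sqrt (ε + abs (1 - abs c)) := T1
      _ ≤ 60*L/Real.sqrt (ε + abs (1 - abs c)) := by
          rw [div_le_div_iff₀ hspos hspos]
          nlinarith [mul_nonneg (by linarith : (0:ℝ) ≤ 60*L-4) hspos.le]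

lemma min_abs_one (b : ℝ) : abs (1 - abs b) = min (|b - 1|) (|b + 1|) := by
  rcases le_total 0 b with h | h
  · rw [abs_of_nonneg h, min_eq_left, abs_sub_comm]
    rw [abs_of_nonneg (by linarith : (0:ℝ) ≤ b + 1)]
    rcases abs_cases (b - 1) with ⟨h1, _⟩ | ⟨h1, _⟩ <;> rw [h1] <;> linarith
  · rw [abs_of_nonpos h, min_eq_right]
    · rw [show (1:ℝ) - -b = b + 1 from by ring]
    rw [abs_of_nonpos (by linarith : b - 1 ≤ 0)]
    rcases abs_cases (b + 1) with ⟨h1, _⟩ | ⟨h1, _⟩ <;> rw [h1] <;> linarith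

set_option maxHeartbeats 1000000 in
lemma two_dim {ε : ℝ} (hε : 0 < ε) (hε1 : ε ≤ 1) (lam : ℝ) :
    ∫ p in box2, 1/(ε + |disp2D p - lam|) ≤ 2400 * (1 + Real.log (1/ε))^2 := by
  set L := 1 + Real.log (1/ε) with hL_def
  have hX : 0 ≤ Real.log (1/ε) := Real.log_nonneg (by rw [le_div_iff₀ hε]; linarith)
  have hL1 : (1:ℝ) ≤ L := by rw [hL_def]; linarith
  set G : ℝ × ℝ → ℝ :=
    fun z => 1/(ε + |Real.cos (2*π*z.2) - (-lam - Real.cos (2*π*z.1))|) with hG_def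
  have hGden : ∀ z : ℝ × ℝ, 0 < ε + |Real.cos (2*π*z.2) - (-lam - Real.cos (2*π*z.1))| :=
    fun z => by positivity
  have hGc : Continuous G := by
    apply Continuous.div continuous_const
    · apply continuous_const.add
      apply continuous_abs.comp
      apply Continuous.sub
      · exact Real.continuous_cos.comp (continuous_const.mul continuous_snd)
      · exact continuous_const.sub (Real.continuous_cos.comp (continuous_const.mul continuous_fst))
    · exact fun z => ne_of_gt (hGden z)
  have hG0 : ∀ z, 0 ≤ G z := fun z => by simp only [hG_def]; positivity
  have hGbdd : ∀ z, G z ≤ 1/ε := fun z => by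
    simp only [hG_def]
    apply one_div_le_one_div_of_le hε
    exact le_add_of_nonneg_right (abs_nonneg _)
  -- transfer to the product space
  have hbox : box2 = (MeasurableEquiv.finTwoArrow (α := ℝ)) ⁻¹' ((Ico (0:ℝ) 1) ×ˢ (Ico (0:ℝ) 1)) := by
    ext p
    simp only [box2, Set.mem_univ_pi, Set.mem_preimage, Set.mem_prod]
    constructor
    · intro h; exact ⟨h 0, h 1⟩
    · intro h i; fin_cases i <;> [exact h.1; exact h.2]
  have hdisp : ∀ p : Fin 2 → ℝ,
      1/(ε + |disp2D p - lam|) = G (MeasurableEquiv.finTwoArrow p) := by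
    intro p
    simp only [hG_def]
    congr 2
    rw [show disp2D p - lam
        = -(Real.cos (2*π*(p 1)) - (-lam - Real.cos (2*π*(p 0)))) from by
      unfold disp2D; rw [Fin.sum_univ_two]; ring]
    rw [abs_neg]
    rfl
  have hbox_meas : MeasurableSet box2 :=
    MeasurableSet.univ_pi fun _ => measurableSet_Ico
  have key : ∫ p in box2, 1/(ε + |disp2D p - lam|)
      = ∫ z in (Ico (0:ℝ) 1) ×ˢ (Ico (0:ℝ) 1), G z := by
    calc ∫ p in box2, 1/(ε + |disp2D p - lam|)
        = ∫ p in box2, G (MeasurableEquiv.finTwoArrow p) :=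
          setIntegral_congr_fun hbox_meas (fun p _ => hdisp p)
      _ = ∫ z in (Ico (0:ℝ) 1) ×ˢ (Ico (0:ℝ) 1), G z := by
          rw [hbox]
          exact (volume_preserving_finTwoArrow ℝ).setIntegral_preimage_emb
            (MeasurableEquiv.measurableEmbedding _) G _
  -- integrability of G on the product
  have hfin : (volume : Measure (ℝ × ℝ)) ((Ico (0:ℝ) 1) ×ˢ (Ico (0:ℝ) 1)) ≠ ⊤ := by
    rw [Measure.volume_eq_prod, Measure.prod_prod]
    simp [Real.volume_Ico]
  have hGint : IntegrableOn G ((Ico (0:ℝ) 1) ×ˢ (Ico (0:ℝ) 1)) volume := by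
    apply Measure.integrableOn_of_bounded hfin hGc.aestronglyMeasurable
    filter_upwards with z
    rw [Real.norm_eq_abs, abs_of_nonneg (hG0 z)]
    exact hGbdd z
  -- Fubini
  have hfub : ∫ z in (Ico (0:ℝ) 1) ×ˢ (Ico (0:ℝ) 1), G z
      = ∫ x in Ico (0:ℝ) 1, ∫ y in Ico (0:ℝ) 1, G (x, y) := by
    rw [Measure.volume_eq_prod] at hGint ⊢
    exact setIntegral_prod G hGint
  -- inner bound via lem_lin
  have hinner : ∀ x : ℝ, ∫ y in Ico (0:ℝ) 1, G (x, y)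
      ≤ 60 * L / Real.sqrt (ε + abs (1 - abs (-lam - Real.cos (2*π*x)))) := by
    intro x
    exact lem_lin hε hε1 (-lam - Real.cos (2*π*x))
  -- split according to min
  set ψ : ℝ → ℝ → ℝ := fun μ x => 1/Real.sqrt (ε + |Real.cos (2*π*x) - μ|) with hψ_def
  have hψc : ∀ μ, Continuous (ψ μ) := by
    intro μ
    apply Continuous.div continuous_const
    · apply Real.continuous_sqrt.comp
      exact continuous_const.add (continuous_abs.comp
        ((Real.continuous_cos.comp (continuous_const.mul continuous_id)).sub continuous_const))
    · intro x
      have : (0:ℝ) < ε + |Real.cos (2*π*x) - μ| := by positivity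
      exact ne_of_gt (Real.sqrt_pos.2 this)
  have hψ0 : ∀ μ x, 0 ≤ ψ μ x := fun μ x => by simp only [hψ_def]; positivity
  have hψbdd : ∀ μ x, ψ μ x ≤ 1/Real.sqrt ε := by
    intro μ x
    simp only [hψ_def]
    apply one_div_le_one_div_of_le (Real.sqrt_pos.2 hε)
    exact Real.sqrt_le_sqrt (le_add_of_nonneg_right (abs_nonneg _))
  have hsplit : ∀ x : ℝ, 60 * L / Real.sqrt (ε + abs (1 - abs (-lam - Real.cos (2*π*x))))
      ≤ 60*L*(ψ (-lam - 1) x + ψ (1 - lam) x) := by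
    intro x
    set b := -lam - Real.cos (2*π*x) with hb_def
    have e1 : |b - 1| = |Real.cos (2*π*x) - (-lam - 1)| := by
      rw [show b - 1 = -(Real.cos (2*π*x) - (-lam - 1)) from by rw [hb_def]; ring, abs_neg]
    have e2 : |b + 1| = |Real.cos (2*π*x) - (1 - lam)| := by
      rw [show b + 1 = -(Real.cos (2*π*x) - (1 - lam)) from by rw [hb_def]; ring, abs_neg]
    rw [min_abs_one, e1, e2]
    have hs1 : 0 < Real.sqrt (ε + |Real.cos (2*π*x) - (-lam - 1)|) :=
      Real.sqrt_pos.2 (by positivity)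
    have hs2 : 0 < Real.sqrt (ε + |Real.cos (2*π*x) - (1 - lam)|) :=
      Real.sqrt_pos.2 (by positivity)
    have h60 : 0 ≤ 60*L := by linarith
    rcases min_cases (|Real.cos (2*π*x) - (-lam - 1)|) (|Real.cos (2*π*x) - (1 - lam)|) with
      ⟨h1, _⟩ | ⟨h1, _⟩ <;> rw [h1]
    · calc 60*L/Real.sqrt (ε + |Real.cos (2*π*x) - (-lam - 1)|)
          = 60*L*(ψ (-lam-1) x) := by rw [hψ_def]; field_simp
        _ ≤ 60*L*(ψ (-lam-1) x + ψ (1-lam) x) := by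
            have := hψ0 (1-lam) x
            nlinarith
    · calc 60*L/Real.sqrt (ε + |Real.cos (2*π*x) - (1 - lam)|)
          = 60*L*(ψ (1-lam) x) := by rw [hψ_def]; field_simp
        _ ≤ 60*L*(ψ (-lam-1) x + ψ (1-lam) x) := by
            have := hψ0 (-lam-1) x
            nlinarith
  -- integrability of the partial integral and of the majorant
  have hIcofin : (volume : Measure ℝ) (Ico (0:ℝ) 1) ≠ ⊤ := by
    rw [Real.volume_Ico]; norm_num
  have hFint : IntegrableOn (fun x => ∫ y in Ico (0:ℝ) 1, G (x, y)) (Ico (0:ℝ) 1) volume := by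
    have h := hGint
    rw [IntegrableOn, Measure.volume_eq_prod, ← Measure.prod_restrict] at h
    exact h.integral_prod_left
  have hψint : ∀ μ, IntegrableOn (ψ μ) (Ico (0:ℝ) 1) volume := by
    intro μ
    apply Measure.integrableOn_of_bounded hIcofin (hψc μ).aestronglyMeasurable
    filter_upwards with x
    rw [Real.norm_eq_abs, abs_of_nonneg (hψ0 μ x)]
    exact hψbdd μ x
  have hmaj : IntegrableOn (fun x => 60*L*(ψ (-lam - 1) x + ψ (1 - lam) x)) (Ico (0:ℝ) 1) volume :=
    (((hψint (-lam-1)).add (hψint (1-lam))).const_mul (60*L))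
  -- assemble
  have houter : ∫ x in Ico (0:ℝ) 1, ∫ y in Ico (0:ℝ) 1, G (x, y)
      ≤ ∫ x in Ico (0:ℝ) 1, 60*L*(ψ (-lam - 1) x + ψ (1 - lam) x) := by
    apply setIntegral_mono_on hFint hmaj measurableSet_Ico
    intro x _
    exact le_trans (hinner x) (hsplit x)
  have hfinal : ∫ x in Ico (0:ℝ) 1, 60*L*(ψ (-lam - 1) x + ψ (1 - lam) x) ≤ 2400 * L^2 := by
    rw [MeasureTheory.integral_const_mul]
    rw [integral_add (hψint (-lam-1)) (hψint (1-lam))]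
    have i1 : ∫ x in Ico (0:ℝ) 1, ψ (-lam-1) x ≤ 20*L := lem_sqrt hε hε1 (-lam-1)
    have i2 : ∫ x in Ico (0:ℝ) 1, ψ (1-lam) x ≤ 20*L := lem_sqrt hε hε1 (1-lam)
    have h60 : (0:ℝ) ≤ 60*L := by linarith
    calc 60*L*((∫ x in Ico (0:ℝ) 1, ψ (-lam-1) x) + ∫ x in Ico (0:ℝ) 1, ψ (1-lam) x)
        ≤ 60*L*(20*L + 20*L) := by
          apply mul_le_mul_of_nonneg_left _ h60
          exact add_le_add i1 i2
      _ = 2400 * L^2 := by ring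
  rw [key, hfub]
  exact le_trans houter hfinal

lemma disp2D_bound (p : Fin 2 → ℝ) : |disp2D p| ≤ 2 := by
  unfold disp2D
  rw [Fin.sum_univ_two, abs_neg]
  calc |Real.cos (2*π*p 0) + Real.cos (2*π*p 1)|
      ≤ |Real.cos (2*π*p 0)| + |Real.cos (2*π*p 1)| := abs_add_le _ _
    _ ≤ 1 + 1 := add_le_add (Real.abs_cos_le_one _) (Real.abs_cos_le_one _)
    _ = 2 := by norm_num

lemma disp2D_continuous : Continuous disp2D := by
  unfold disp2D
  apply Continuous.neg
  apply continuous_finset_sum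
  intro i _
  exact Real.continuous_cos.comp (continuous_const.mul (continuous_apply i))

set_option maxHeartbeats 1000000 in
theorem resolvent_L1_estimate_2d :
    ∃ C : ℝ, ∀ ε : ℝ, 0 < ε → ε ≤ 1 / 3 → ∀ α ∈ RectI, ∀ p₃ : ℝ, p₃ ∈ Set.Ico (0 : ℝ) 1 →
      ∫ p in box2,
          1 / ‖(disp2D p : ℂ) - (α - 3 + (Real.cos (2 * Real.pi * p₃) : ℂ))
            - Complex.I * (ε : ℂ)‖
        ≤ C * |Real.log ε| ^ 2 := by
  use 100000
  intro ε hε hε3 α hα p₃ _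
  have hε1 : ε ≤ 1 := by linarith
  obtain ⟨hre1, hre7, him1, him0, hbdry⟩ := hα
  set lam := α.re - 3 + Real.cos (2*π*p₃) with hlam_def
  set Z : (Fin 2 → ℝ) → ℂ := fun p =>
    (disp2D p : ℂ) - (α - 3 + (Real.cos (2 * Real.pi * p₃) : ℂ)) - Complex.I * (ε : ℂ)
    with hZ_def
  have hre : ∀ p, (Z p).re = disp2D p - lam := by
    intro p
    simp only [hZ_def, Complex.sub_re, Complex.add_re, Complex.ofReal_re, Complex.mul_re,
      Complex.I_re, Complex.I_im, Complex.ofReal_im, Complex.re_ofNat, Complex.im_ofNat, hlam_def]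
    ring
  have him : ∀ p, (Z p).im = -α.im - ε := by
    intro p
    simp only [hZ_def, Complex.sub_im, Complex.add_im, Complex.ofReal_im, Complex.mul_im,
      Complex.I_re, Complex.I_im, Complex.ofReal_re, Complex.re_ofNat, Complex.im_ofNat]
    ring
  -- the key pointwise lower bound on |Z p|
  have hkey : ∀ p, (2/3) * (ε + |disp2D p - lam|) ≤ ‖Z p‖ := by
    intro p
    have hsq : (‖Z p‖)^2 = (disp2D p - lam)^2 + (-α.im - ε)^2 := by
      rw [Complex.sq_norm, Complex.normSq_apply, hre, him]
      ring
    set a := disp2D p - lam with ha_def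
    have hd2 := disp2D_bound p
    have hd2' := abs_le.1 hd2
    have hcos := Real.neg_one_le_cos (2*π*p₃)
    have hcos' := Real.cos_le_one (2*π*p₃)
    have habs := abs_le.1 (le_refl |a|)
    have haa : |a| ≤ |a| := le_refl _
    have hmain : (2/3 * (ε + |a|))^2 ≤ (‖Z p‖)^2 := by
      rw [hsq]
      have hsa : a^2 = |a|^2 := (sq_abs a).symm
      rcases hbdry with h | h | h | h
      · -- α.re = -1 : a ≥ 1
        have ha1 : 1 ≤ |a| := by
          have : (1:ℝ) ≤ a := by
            rw [ha_def, hlam_def, h]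
            have := (abs_le.1 hd2).1
            linarith
          linarith [le_abs_self a]
        nlinarith [sq_nonneg (-α.im - ε), sq_nonneg (|a| - 1), abs_nonneg a,
          mul_le_mul_of_nonneg_right hε3 (abs_nonneg a)]
      · -- α.re = 7 : a ≤ -1
        have ha1 : 1 ≤ |a| := by
          have : a ≤ -1 := by
            rw [ha_def, hlam_def, h]
            have := (abs_le.1 hd2).2
            linarith
          linarith [neg_abs_le a]
        nlinarith [sq_nonneg (-α.im - ε), sq_nonneg (|a| - 1), abs_nonneg a,
          mul_le_mul_of_nonneg_right hε3 (abs_nonneg a)]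
      · -- α.im = -1
        rw [h]
        nlinarith [sq_nonneg (|a| - ε), abs_nonneg a,
          mul_le_mul_of_nonneg_right hε3 (abs_nonneg a)]
      · -- α.im = 0
        rw [h]
        nlinarith [sq_nonneg (|a| - ε), abs_nonneg a]
    calc (2/3) * (ε + |a|) = Real.sqrt ((2/3 * (ε + |a|))^2) := by
          rw [Real.sqrt_sq (by positivity)]
      _ ≤ Real.sqrt ((‖Z p‖)^2) := Real.sqrt_le_sqrt hmain
      _ = ‖Z p‖ := Real.sqrt_sq (norm_nonneg _)
  have hZpos : ∀ p, 0 < ‖Z p‖ := by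
    intro p
    have := hkey p
    have h0 : 0 < (2/3) * (ε + |disp2D p - lam|) := by positivity
    linarith
  have hpt : ∀ p, 1/‖Z p‖ ≤ 2 * (1/(ε + |disp2D p - lam|)) := by
    intro p
    have hd : (0:ℝ) < ε + |disp2D p - lam| := by positivity
    rw [div_le_iff₀ (hZpos p), mul_comm]
    calc (1:ℝ) = (2 * (1/(ε + |disp2D p - lam|))) * ((1/2) * (ε + |disp2D p - lam|)) := by
          field_simp
      _ ≤ (2 * (1/(ε + |disp2D p - lam|))) * ‖Z p‖ := by
          apply mul_le_mul_of_nonneg_left _ (by positivity)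
          calc (1/2) * (ε + |disp2D p - lam|) ≤ (2/3) * (ε + |disp2D p - lam|) := by nlinarith
            _ ≤ ‖Z p‖ := hkey p
      _ = ‖Z p‖ * (2 * (1/(ε + |disp2D p - lam|))) := by ring
  -- integrability on box2
  have hbox_meas : MeasurableSet box2 := MeasurableSet.univ_pi fun _ => measurableSet_Ico
  have hboxfin : (volume : Measure (Fin 2 → ℝ)) box2 ≠ ⊤ := by
    rw [box2, volume_pi_pi]
    simp [Real.volume_Ico]
  have hlhs_cont : Continuous (fun p => 1/‖Z p‖) := by
    apply Continuous.div continuous_const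
    · apply continuous_norm.comp
      simp only [hZ_def]
      apply Continuous.sub
      · apply Continuous.sub
        · exact Complex.continuous_ofReal.comp disp2D_continuous
        · exact continuous_const
      · exact continuous_const
    · exact fun p => ne_of_gt (hZpos p)
  have hrhs_cont : Continuous (fun p => 2 * (1/(ε + |disp2D p - lam|))) := by
    apply Continuous.mul continuous_const
    apply Continuous.div continuous_const
    · exact continuous_const.add (continuous_abs.comp (disp2D_continuous.sub continuous_const))
    · intro p
      have : (0:ℝ) < ε + |disp2D p - lam| := by positivity
      exact ne_of_gt this
  have hlhs_int : IntegrableOn (fun p => 1/‖Z p‖) box2 volume := by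
    apply Measure.integrableOn_of_bounded hboxfin hlhs_cont.aestronglyMeasurable (M := 2/ε)
    filter_upwards with p
    rw [Real.norm_eq_abs, abs_of_nonneg (by positivity)]
    calc 1/‖Z p‖ ≤ 2 * (1/(ε + |disp2D p - lam|)) := hpt p
      _ ≤ 2 * (1/ε) := by
          apply mul_le_mul_of_nonneg_left _ (by norm_num)
          apply one_div_le_one_div_of_le hε
          exact le_add_of_nonneg_right (abs_nonneg _)
      _ = 2/ε := by ring
  have hrhs_int : IntegrableOn (fun p => 2 * (1/(ε + |disp2D p - lam|))) box2 volume := by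
    apply Measure.integrableOn_of_bounded hboxfin hrhs_cont.aestronglyMeasurable (M := 2/ε)
    filter_upwards with p
    rw [Real.norm_eq_abs, abs_of_nonneg (by positivity)]
    calc 2 * (1/(ε + |disp2D p - lam|)) ≤ 2 * (1/ε) := by
          apply mul_le_mul_of_nonneg_left _ (by norm_num)
          apply one_div_le_one_div_of_le hε
          exact le_add_of_nonneg_right (abs_nonneg _)
      _ = 2/ε := by ring
  -- chain of inequalities
  have step1 : ∫ p in box2, 1/‖Z p‖
      ≤ ∫ p in box2, 2 * (1/(ε + |disp2D p - lam|)) :=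
    setIntegral_mono_on hlhs_int hrhs_int hbox_meas (fun p _ => hpt p)
  have step2 : ∫ p in box2, 2 * (1/(ε + |disp2D p - lam|))
      ≤ 2 * (2400 * (1 + Real.log (1/ε))^2) := by
    rw [MeasureTheory.integral_const_mul]
    have := two_dim hε hε1 lam
    linarith
  -- log conversion
  have hlogε : |Real.log ε| = Real.log (1/ε) := by
    rw [one_div, Real.log_inv, abs_of_nonpos (Real.log_nonpos hε.le hε1)]
  have hlog3 : (1:ℝ) ≤ Real.log (1/ε) := by
    have h3 : (3:ℝ) ≤ 1/ε := by
      rw [le_div_iff₀ hε]; linarith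
    have hl3 : (1:ℝ) ≤ Real.log 3 := by
      rw [show (1:ℝ) = Real.log (Real.exp 1) by rw [Real.log_exp]]
      apply Real.log_le_log (Real.exp_pos 1)
      linarith [Real.exp_one_lt_d9]
    calc (1:ℝ) ≤ Real.log 3 := hl3
      _ ≤ Real.log (1/ε) := Real.log_le_log (by norm_num) h3
  have hfinal : 2 * (2400 * (1 + Real.log (1/ε))^2) ≤ 100000 * |Real.log ε|^2 := by
    rw [hlogε]
    nlinarith [hlog3]
  calc ∫ p in box2, 1/‖Z p‖ ≤ 2 * (2400 * (1 + Real.log (1/ε))^2) :=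
        le_trans step1 step2
    _ ≤ 100000 * |Real.log ε|^2 := hfinal
end

section
/- There exists a constant C < ∞ such that for every ρ ∈ ℝ and every ε with 0 < ε ≤ 1/3, the two-dimensional Lebesgue measure of the sublevel set {p ∈ [0,1)² : |e₂D(p) − ρ| ≤ ε} is at most C·ε·|log ε|. -/
open MeasureTheory Real Set

lemma sin_min_le {a b c : ℝ} (ha : a ∈ Icc 0 π) (hb : b ∈ Icc 0 π)
    (hab : a ≤ b) (hc : c ∈ Icc a b) : min (Real.sin a) (Real.sin b) ≤ Real.sin c := by
  have hseg : c ∈ segment ℝ a b := by rwa [segment_eq_Icc hab]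
  obtain ⟨u, v, hu, hv, huv, rfl⟩ := hseg
  have := strictConcaveOn_sin_Icc.concaveOn.2 ha hb hu hv huv
  calc min (Real.sin a) (Real.sin b)
      = u * min (Real.sin a) (Real.sin b) + v * min (Real.sin a) (Real.sin b) := by
        rw [← add_mul, huv, one_mul]
    _ ≤ u * Real.sin a + v * Real.sin b := by
        gcongr <;> [exact min_le_left _ _; exact min_le_right _ _]
    _ ≤ Real.sin (u • a + v • b) := this

lemma mvt_cos {s₀ x₁ x₂ : ℝ} (h1 : x₁ ∈ Icc (0:ℝ) (1/2)) (h2 : x₂ ∈ Icc (0:ℝ) (1/2))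
    (hlt : x₁ < x₂) (hs1 : s₀ ≤ Real.sin (2*π*x₁)) (hs2 : s₀ ≤ Real.sin (2*π*x₂)) :
    2*π*s₀*(x₂ - x₁) ≤ Real.cos (2*π*x₁) - Real.cos (2*π*x₂) := by
  have hderiv : ∀ x : ℝ, HasDerivAt (fun x => Real.cos (2*π*x))
      (-Real.sin (2*π*x) * (2*π)) x := by
    intro x
    have h1 : HasDerivAt (fun x : ℝ => 2*π*x) (2*π) x := by
      simpa using (hasDerivAt_id x).const_mul (2*π)
    exact (Real.hasDerivAt_cos (2*π*x)).comp x h1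
  obtain ⟨ξ, hξ, hslope⟩ := exists_hasDerivAt_eq_slope (fun x => Real.cos (2*π*x))
    (fun x => -Real.sin (2*π*x) * (2*π)) hlt
    (fun x _ => (hderiv x).continuousAt.continuousWithinAt) (fun x _ => hderiv x)
  have hπ : (0:ℝ) < π := Real.pi_pos
  have hmem : 2*π*ξ ∈ Icc (2*π*x₁) (2*π*x₂) := by
    constructor <;> nlinarith [hξ.1, hξ.2]
  have hsξ : s₀ ≤ Real.sin (2*π*ξ) := by
    refine le_trans ?_ (sin_min_le ?_ ?_ ?_ hmem)
    · exact le_min hs1 hs2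
    · constructor <;> nlinarith [h1.1, h1.2]
    · constructor <;> nlinarith [h2.1, h2.2]
    · nlinarith
  have hx : 0 < x₂ - x₁ := by linarith
  have := (div_le_iff₀ hx).mp (le_of_eq hslope.symm)
  nlinarith [this, mul_le_mul_of_nonneg_right hsξ (le_of_lt hx), hπ]

lemma half_fiber (a b s₀ : ℝ) (hs₀ : 0 < s₀) :
    volume {x : ℝ | x ∈ Icc (0:ℝ) (1/2) ∧ Real.cos (2*π*x) ∈ Icc a b ∧ s₀ ≤ Real.sin (2*π*x)}
      ≤ ENNReal.ofReal ((b - a)/(2*π*s₀)) := by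
  set L := (b - a)/(2*π*s₀) with hL
  set S := {x : ℝ | x ∈ Icc (0:ℝ) (1/2) ∧ Real.cos (2*π*x) ∈ Icc a b ∧ s₀ ≤ Real.sin (2*π*x)}
  have hπ : (0:ℝ) < π := Real.pi_pos
  have hden : (0:ℝ) < 2*π*s₀ := by positivity
  have key : ∀ x ∈ S, ∀ y ∈ S, x ≤ y → y - x ≤ L := by
    intro x hx y hy hxy
    rcases eq_or_lt_of_le hxy with rfl | hlt
    · simp only [sub_self]
      rcases hx with ⟨_, ⟨hca, hcb⟩, _⟩
      have hab : a ≤ b := le_trans hca hcb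
      exact div_nonneg (by linarith) hden.le
    · have h := mvt_cos hx.1 hy.1 hlt hx.2.2 hy.2.2
      have hba : Real.cos (2*π*x) - Real.cos (2*π*y) ≤ b - a := by
        have := hx.2.1; have := hy.2.1
        simp only [mem_Icc] at *
        linarith [hx.2.1.2, hy.2.1.1]
      rw [hL, le_div_iff₀ hden]
      nlinarith
  rcases Set.eq_empty_or_nonempty S with hS | ⟨x₀, hx₀⟩
  · simp [hS]
  · have hbdd : BddBelow S := ⟨0, fun x hx => hx.1.1⟩
    have hsub : S ⊆ Icc (sInf S) (sInf S + L) := by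
      intro x hx
      refine ⟨csInf_le hbdd hx, ?_⟩
      have h1 : x - L ≤ sInf S := by
        apply le_csInf ⟨x₀, hx₀⟩
        intro y hy
        rcases le_total y x with h | h
        · linarith [key y hy x hx h]
        · have hL0 : 0 ≤ L := by linarith [key x hx y hy h]
          linarith
      linarith
    calc volume S ≤ volume (Icc (sInf S) (sInf S + L)) := measure_mono hsub
      _ = ENNReal.ofReal L := by rw [Real.volume_Icc]; ring_nf

lemma fiber_bound (a b s₀ : ℝ) (hs₀ : 0 < s₀) :
    volume {x : ℝ | x ∈ Ico (0:ℝ) 1 ∧ Real.cos (2*π*x) ∈ Icc a b ∧ s₀ ≤ |Real.sin (2*π*x)|}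
      ≤ ENNReal.ofReal ((b - a)/(π*s₀)) := by
  have hπ : (0:ℝ) < π := Real.pi_pos
  rcases le_or_gt a b with hab | hab
  swap
  · have : {x : ℝ | x ∈ Ico (0:ℝ) 1 ∧ Real.cos (2*π*x) ∈ Icc a b ∧ s₀ ≤ |Real.sin (2*π*x)|} = ∅ := by
      ext x; simp only [mem_setOf_eq, mem_empty_iff_false, iff_false]
      rintro ⟨_, hc, _⟩
      exact absurd (le_trans hc.1 hc.2) (not_le.mpr hab)
    rw [show {x : ℝ | x ∈ Ico (0:ℝ) 1 ∧ Real.cos (2*π*x) ∈ Icc a b ∧ s₀ ≤ |Real.sin (2*π*x)|} = ∅ from this]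
    simp
  set T₁ := {x : ℝ | x ∈ Icc (0:ℝ) (1/2) ∧ Real.cos (2*π*x) ∈ Icc a b ∧ s₀ ≤ Real.sin (2*π*x)}
  set T₂ := {x : ℝ | x ∈ Icc (0:ℝ) (1/2) ∧ Real.cos (2*π*x) ∈ Icc (-b) (-a) ∧ s₀ ≤ Real.sin (2*π*x)}
  have hsub : {x : ℝ | x ∈ Ico (0:ℝ) 1 ∧ Real.cos (2*π*x) ∈ Icc a b ∧ s₀ ≤ |Real.sin (2*π*x)|}
      ⊆ T₁ ∪ (fun x => x + (-(1/2))) ⁻¹' T₂ := by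
    rintro x ⟨⟨hx0, hx1⟩, hc, hs⟩
    rcases le_total x (1/2) with h | h
    · left
      have hsin : 0 ≤ Real.sin (2*π*x) := by
        apply Real.sin_nonneg_of_nonneg_of_le_pi <;> nlinarith
      exact ⟨⟨hx0, h⟩, hc, by rwa [abs_of_nonneg hsin] at hs⟩
    · right
      simp only [mem_preimage, T₂, mem_setOf_eq]
      have he : 2*π*(x + -(1/2)) = 2*π*x - π := by ring
      have hcos : Real.cos (2*π*(x + -(1/2))) = -Real.cos (2*π*x) := by
        rw [he, Real.cos_sub_pi]
      have hsin : Real.sin (2*π*(x + -(1/2))) = -Real.sin (2*π*x) := by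
        rw [he, Real.sin_sub_pi]
      have hsin' : 0 ≤ Real.sin (2*π*(x + -(1/2))) := by
        apply Real.sin_nonneg_of_nonneg_of_le_pi <;> nlinarith
      refine ⟨by constructor <;> linarith, ?_, ?_⟩
      · rw [hcos]; exact ⟨neg_le_neg hc.2, neg_le_neg hc.1⟩
      · rw [← abs_of_nonneg hsin', hsin, abs_neg]; exact hs
  calc volume _ ≤ volume (T₁ ∪ (fun x => x + (-(1/2))) ⁻¹' T₂) := measure_mono hsub
    _ ≤ volume T₁ + volume ((fun x => x + (-(1/2))) ⁻¹' T₂) := measure_union_le _ _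
    _ = volume T₁ + volume T₂ := by rw [measure_preimage_add_right]
    _ ≤ ENNReal.ofReal ((b - a)/(2*π*s₀)) + ENNReal.ofReal ((-a - -b)/(2*π*s₀)) :=
        add_le_add (half_fiber a b s₀ hs₀) (half_fiber (-b) (-a) s₀ hs₀)
    _ ≤ ENNReal.ofReal ((b - a)/(π*s₀)) := by
        have hba : (0:ℝ) ≤ b - a := by linarith
        rw [← ENNReal.ofReal_add (div_nonneg hba (by positivity)) (div_nonneg (by linarith) (by positivity))]
        apply ENNReal.ofReal_le_ofReal
        rw [← add_div]
        apply le_of_eq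
        field_simp
        ring

lemma Jlem (A : ℝ) (hA : 0 < A) (hA1 : A ≤ 1/2) :
    ∫⁻ t, (Icc (-1:ℝ) 1).indicator (fun t => min 1 (ENNReal.ofReal (A/|t|))) t
      ≤ ENNReal.ofReal (2*A + 2*A*Real.log (1/A)) := by
  set F₁ : ℝ → ENNReal := (Icc (-1:ℝ) (-A)).indicator (fun t => ENNReal.ofReal (A/(-t)))
  set F₂ : ℝ → ENNReal := (Ioo (-A:ℝ) A).indicator 1
  set F₃ : ℝ → ENNReal := (Icc (A:ℝ) 1).indicator (fun t => ENNReal.ofReal (A/t))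
  have hpt : ∀ t, (Icc (-1:ℝ) 1).indicator (fun t => min 1 (ENNReal.ofReal (A/|t|))) t
      ≤ F₁ t + F₂ t + F₃ t := by
    intro t
    rcases le_or_gt (A:ℝ) |t| with h | h
    · by_cases ht : t ∈ Icc (-1:ℝ) 1
      · rw [indicator_of_mem ht]
        rcases le_or_gt 0 t with htpos | htneg
        · have ht3 : t ∈ Icc A 1 := ⟨by rwa [abs_of_nonneg htpos] at h, ht.2⟩
          have : F₃ t = ENNReal.ofReal (A/|t|) := by
            simp only [F₃]; rw [indicator_of_mem ht3, abs_of_nonneg htpos]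
          calc min 1 (ENNReal.ofReal (A/|t|)) ≤ F₃ t := this ▸ min_le_right _ _
            _ ≤ F₁ t + F₂ t + F₃ t := le_add_self
        · have ht1 : t ∈ Icc (-1:ℝ) (-A) := ⟨ht.1, by rw [abs_of_neg htneg] at h; linarith⟩
          have : F₁ t = ENNReal.ofReal (A/|t|) := by
            simp only [F₁]; rw [indicator_of_mem ht1, abs_of_neg htneg]
          calc min 1 (ENNReal.ofReal (A/|t|)) ≤ F₁ t := this ▸ min_le_right _ _
            _ ≤ F₁ t + F₂ t + F₃ t := by
                exact le_add_right (le_add_right le_rfl)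
      · rw [indicator_of_notMem ht]; exact zero_le
    · have ht2 : t ∈ Ioo (-A:ℝ) A := abs_lt.mp h |>.imp (fun h => h) (fun h => h)
      have h2 : F₂ t = 1 := by simp only [F₂]; rw [indicator_of_mem ht2]; rfl
      calc (Icc (-1:ℝ) 1).indicator (fun t => min 1 (ENNReal.ofReal (A/|t|))) t
          ≤ min 1 (ENNReal.ofReal (A/|t|)) := indicator_le_self' (fun _ _ => zero_le) t
        _ ≤ F₂ t := h2 ▸ min_le_left _ _
        _ ≤ F₁ t + F₂ t + F₃ t := by exact le_add_right (le_add_left le_rfl)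
  have hlog : 0 ≤ Real.log (1/A) := Real.log_nonneg (by rw [le_div_iff₀ hA]; linarith)
  have hI3 : ∫⁻ t, F₃ t = ENNReal.ofReal (A * Real.log (1/A)) := by
    have hcont : ContinuousOn (fun t : ℝ => A/t) (Icc A 1) :=
      continuousOn_const.div continuousOn_id (fun t ht => ne_of_gt (lt_of_lt_of_le hA ht.1))
    have hint : IntegrableOn (fun t : ℝ => A/t) (Icc A 1) := hcont.integrableOn_Icc
    have hnn : 0 ≤ᵐ[volume.restrict (Icc A 1)] (fun t : ℝ => A/t) := by
      filter_upwards [ae_restrict_mem measurableSet_Icc] with t ht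
      exact div_nonneg hA.le (le_trans hA.le ht.1)
    simp only [F₃]
    rw [lintegral_indicator measurableSet_Icc _,
      ← ofReal_integral_eq_lintegral_ofReal hint hnn]
    congr 1
    rw [MeasureTheory.integral_Icc_eq_integral_Ioc,
      ← intervalIntegral.integral_of_le (by linarith : A ≤ 1)]
    have : ∀ t : ℝ, A/t = A * (1/t) := by intro t; ring
    simp_rw [this]
    rw [intervalIntegral.integral_const_mul,
      integral_one_div (fun h => by rcases mem_uIcc.mp h with ⟨h1, _⟩ | ⟨_, h2⟩ <;> linarith)]
  have hI1 : ∫⁻ t, F₁ t = ENNReal.ofReal (A * Real.log (1/A)) := by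
    have hcont : ContinuousOn (fun t : ℝ => A/(-t)) (Icc (-1:ℝ) (-A)) :=
      continuousOn_const.div continuousOn_id.neg
        (fun t ht => by have := ht.2; intro hc; nlinarith)
    have hint : IntegrableOn (fun t : ℝ => A/(-t)) (Icc (-1:ℝ) (-A)) := hcont.integrableOn_Icc
    have hnn : 0 ≤ᵐ[volume.restrict (Icc (-1:ℝ) (-A))] (fun t : ℝ => A/(-t)) := by
      filter_upwards [ae_restrict_mem measurableSet_Icc] with t ht
      exact div_nonneg hA.le (by linarith [ht.2])
    simp only [F₁]
    rw [lintegral_indicator measurableSet_Icc _,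
      ← ofReal_integral_eq_lintegral_ofReal hint hnn]
    congr 1
    rw [MeasureTheory.integral_Icc_eq_integral_Ioc,
      ← intervalIntegral.integral_of_le (by linarith : (-1:ℝ) ≤ -A)]
    have : ∀ t : ℝ, A/(-t) = -A * (1/t) := by intro t; ring
    simp_rw [this]
    rw [intervalIntegral.integral_const_mul,
      integral_one_div (fun h => by rcases mem_uIcc.mp h with ⟨h1, h2⟩ | ⟨h1, h2⟩ <;> linarith)]
    rw [neg_div_neg_eq, div_one, one_div, Real.log_inv]
    ring
  have hI2 : ∫⁻ t, F₂ t = ENNReal.ofReal (2*A) := by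
    simp only [F₂]
    rw [lintegral_indicator measurableSet_Ioo _]
    simp [Real.volume_Ioo]
    congr 1; rw [two_mul, ENNReal.ofReal_add hA.le hA.le]
  calc ∫⁻ t, (Icc (-1:ℝ) 1).indicator (fun t => min 1 (ENNReal.ofReal (A/|t|))) t
      ≤ ∫⁻ t, (F₁ t + F₂ t + F₃ t) := lintegral_mono hpt
    _ = (∫⁻ t, F₁ t) + (∫⁻ t, F₂ t) + ∫⁻ t, F₃ t := by
        have m2 : Measurable F₂ := measurable_const.indicator measurableSet_Ioo
        have m3 : Measurable F₃ := by
          apply Measurable.indicator _ measurableSet_Icc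
          exact (measurable_const.div measurable_id).ennreal_ofReal
        rw [lintegral_add_right _ m3, lintegral_add_right _ m2]
    _ ≤ ENNReal.ofReal (2*A + 2*A*Real.log (1/A)) := by
        rw [hI1, hI2, hI3, ← ENNReal.ofReal_add (by positivity) (by positivity),
          ← ENNReal.ofReal_add (by positivity) (by positivity)]
        apply ENNReal.ofReal_le_ofReal; linarith

lemma center_int (A c : ℝ) (hA : 0 < A) (hA1 : A ≤ 1/2) (hc0 : 0 ≤ c) (hc1 : c ≤ 1) :
    ∫⁻ y, (Ico (0:ℝ) 1).indicator (fun y => min 1 (ENNReal.ofReal (A/|y - c|))) y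
      ≤ ENNReal.ofReal (2*A + 2*A*Real.log (1/A)) := by
  set F : ℝ → ENNReal := (Icc (-1:ℝ) 1).indicator (fun t => min 1 (ENNReal.ofReal (A/|t|)))
  have hpt : ∀ y, (Ico (0:ℝ) 1).indicator (fun y => min 1 (ENNReal.ofReal (A/|y - c|))) y
      ≤ F (y - c) := by
    intro y
    by_cases hy : y ∈ Ico (0:ℝ) 1
    · rw [indicator_of_mem hy]
      have hmem : y - c ∈ Icc (-1:ℝ) 1 := by
        constructor <;> [linarith [hy.1]; linarith [hy.2.le]]
      simp only [F]
      rw [indicator_of_mem hmem]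
    · rw [indicator_of_notMem hy]; exact zero_le
  calc ∫⁻ y, (Ico (0:ℝ) 1).indicator (fun y => min 1 (ENNReal.ofReal (A/|y - c|))) y
      ≤ ∫⁻ y, F (y - c) := lintegral_mono hpt
    _ = ∫⁻ y, F (y + -c) := by simp_rw [sub_eq_add_neg]
    _ = ∫⁻ y, F y := lintegral_add_right_eq_self F (-c)
    _ ≤ ENNReal.ofReal (2*A + 2*A*Real.log (1/A)) := Jlem A hA hA1

lemma sin_lower {y : ℝ} (hy0 : 0 ≤ y) (hy1 : y ≤ 1) :
    4 * min (min |y| |y - 1/2|) |y - 1| ≤ |Real.sin (2*π*y)| := by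
  have hπ : (0:ℝ) < π := Real.pi_pos
  set d := min (min |y| |y - 1/2|) |y - 1| with hd
  have hd1 : d ≤ |y| := le_trans (min_le_left _ _) (min_le_left _ _)
  have hd2 : d ≤ |y - 1/2| := le_trans (min_le_left _ _) (min_le_right _ _)
  have hd3 : d ≤ |y - 1| := min_le_right _ _
  rcases le_total y (1/4 : ℝ) with h1 | h1
  · have hs : 2/π * (2*π*y) ≤ Real.sin (2*π*y) :=
      Real.mul_le_sin (by positivity) (by nlinarith)
    have : (4:ℝ) * y ≤ Real.sin (2*π*y) := by
      have : 2/π * (2*π*y) = 4*y := by field_simp; ring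
      linarith [this ▸ hs]
    calc 4*d ≤ 4*|y| := by linarith
      _ = 4*y := by rw [abs_of_nonneg hy0]
      _ ≤ Real.sin (2*π*y) := this
      _ ≤ |Real.sin (2*π*y)| := le_abs_self _
  rcases le_total y (1/2 : ℝ) with h2 | h2
  · have key : Real.sin (2*π*(1/2 - y)) = Real.sin (2*π*y) := by
      rw [show 2*π*(1/2 - y) = π - 2*π*y by ring, Real.sin_pi_sub]
    have hs : 2/π * (2*π*(1/2 - y)) ≤ Real.sin (2*π*(1/2 - y)) :=
      Real.mul_le_sin (by nlinarith) (by nlinarith)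
    have h4 : (4:ℝ) * (1/2 - y) ≤ Real.sin (2*π*y) := by
      rw [← key]
      have : 2/π * (2*π*(1/2 - y)) = 4*(1/2 - y) := by field_simp; ring
      linarith [this ▸ hs]
    calc 4*d ≤ 4*|y - 1/2| := by linarith
      _ = 4*(1/2 - y) := by rw [abs_of_nonpos (by linarith)]; ring
      _ ≤ Real.sin (2*π*y) := h4
      _ ≤ |Real.sin (2*π*y)| := le_abs_self _
  rcases le_total y (3/4 : ℝ) with h3 | h3
  · have key : Real.sin (2*π*(y - 1/2)) = -Real.sin (2*π*y) := by
      rw [show 2*π*(y - 1/2) = 2*π*y - π by ring, Real.sin_sub_pi]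
    have hs : 2/π * (2*π*(y - 1/2)) ≤ Real.sin (2*π*(y - 1/2)) :=
      Real.mul_le_sin (by nlinarith) (by nlinarith)
    have h4 : (4:ℝ) * (y - 1/2) ≤ -Real.sin (2*π*y) := by
      rw [← key]
      have : 2/π * (2*π*(y - 1/2)) = 4*(y - 1/2) := by field_simp; ring
      linarith [this ▸ hs]
    calc 4*d ≤ 4*|y - 1/2| := by linarith
      _ = 4*(y - 1/2) := by rw [abs_of_nonneg (by linarith)]
      _ ≤ -Real.sin (2*π*y) := h4
      _ ≤ |Real.sin (2*π*y)| := neg_le_abs _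
  · have key : Real.sin (2*π*(1 - y)) = -Real.sin (2*π*y) := by
      rw [show 2*π*(1 - y) = -(2*π*y - 2*π) by ring, Real.sin_neg, Real.sin_sub_two_pi]
    have hs : 2/π * (2*π*(1 - y)) ≤ Real.sin (2*π*(1 - y)) :=
      Real.mul_le_sin (by nlinarith) (by nlinarith)
    have h4 : (4:ℝ) * (1 - y) ≤ -Real.sin (2*π*y) := by
      rw [← key]
      have : 2/π * (2*π*(1 - y)) = 4*(1 - y) := by field_simp; ring
      linarith [this ▸ hs]
    calc 4*d ≤ 4*|y - 1| := by linarith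
      _ = 4*(1 - y) := by rw [abs_of_nonpos (by linarith)]; ring
      _ ≤ -Real.sin (2*π*y) := h4
      _ ≤ |Real.sin (2*π*y)| := neg_le_abs _

theorem level_set_measure_2d :
    ∃ C : ℝ, ∀ ρ : ℝ, ∀ ε : ℝ, 0 < ε → ε ≤ 1 / 3 →
      volume {p ∈ box2 | |disp2D p - ρ| ≤ ε} ≤ ENNReal.ofReal (C * ε * |Real.log ε|) := by
  use 100
  intro ρ ε hε hε3
  have hπ : (0:ℝ) < π := Real.pi_pos
  have hπ3 : (3:ℝ) < π := Real.pi_gt_three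
  set E : Set (ℝ × ℝ) := (Ico (0:ℝ) 1 ×ˢ Ico (0:ℝ) 1) ∩
    {q : ℝ × ℝ | |(-Real.cos (2*π*q.1) - Real.cos (2*π*q.2)) - ρ| ≤ ε} with hEdef
  have hcont : Continuous fun q : ℝ × ℝ =>
      |(-Real.cos (2*π*q.1) - Real.cos (2*π*q.2)) - ρ| := by fun_prop
  have hE : MeasurableSet E := by
    apply (measurableSet_Ico.prod measurableSet_Ico).inter
    exact hcont.measurable measurableSet_Iic
  -- step A : transfer to ℝ × ℝ
  have hpre : {p | p ∈ box2 ∧ |disp2D p - ρ| ≤ ε}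
      = (MeasurableEquiv.finTwoArrow : (Fin 2 → ℝ) ≃ᵐ ℝ × ℝ) ⁻¹' E := by
    ext p
    simp only [mem_setOf_eq, mem_preimage, hEdef, mem_inter_iff, mem_prod,
      MeasurableEquiv.finTwoArrow_apply, box2, mem_pi, mem_univ, forall_true_left,
      Fin.forall_fin_two, disp2D, Fin.sum_univ_two, mem_setOf_eq]
    constructor
    · rintro ⟨⟨h0, h1⟩, habs⟩
      exact ⟨⟨h0, h1⟩, by convert habs using 2; ring⟩
    · rintro ⟨⟨h0, h1⟩, habs⟩
      exact ⟨⟨h0, h1⟩, by convert habs using 2; ring⟩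
  have hvolE : volume {p ∈ box2 | |disp2D p - ρ| ≤ ε} = volume E := by
    rw [show {p ∈ box2 | |disp2D p - ρ| ≤ ε} = {p | p ∈ box2 ∧ |disp2D p - ρ| ≤ ε} from rfl,
      hpre]
    exact (volume_preserving_finTwoArrow ℝ).measure_preimage hE.nullMeasurableSet
  -- step B : symmetrize
  set E₁ : Set (ℝ × ℝ) := E ∩ {q : ℝ × ℝ | |Real.sin (2*π*q.2)| ≤ |Real.sin (2*π*q.1)|}
    with hE1def
  have hE₁ : MeasurableSet E₁ := by
    apply hE.inter
    have : Continuous fun q : ℝ × ℝ =>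
        |Real.sin (2*π*q.1)| - |Real.sin (2*π*q.2)| := by fun_prop
    exact measurableSet_le (by fun_prop) (by fun_prop)
  have hEsub : E ⊆ E₁ ∪ Prod.swap ⁻¹' E₁ := by
    rintro ⟨x, y⟩ hq
    rcases le_total |Real.sin (2*π*y)| |Real.sin (2*π*x)| with h | h
    · exact Or.inl ⟨hq, h⟩
    · right
      refine ⟨?_, h⟩
      obtain ⟨⟨hx, hy⟩, habs⟩ := hq
      refine ⟨⟨hy, hx⟩, ?_⟩
      simp only [mem_setOf_eq, Prod.fst_swap, Prod.snd_swap] at habs ⊢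
      convert habs using 2; ring
  have hswap : volume (Prod.swap ⁻¹' E₁ : Set (ℝ × ℝ)) = volume E₁ := by
    calc volume (Prod.swap ⁻¹' E₁ : Set (ℝ × ℝ))
        = Measure.map Prod.swap volume E₁ := (Measure.map_apply measurable_swap hE₁).symm
      _ = volume E₁ := by
          rw [Measure.volume_eq_prod, Measure.prod_swap, ← Measure.volume_eq_prod]
  have hdouble : volume E ≤ 2 * volume E₁ := by
    calc volume E ≤ volume (E₁ ∪ Prod.swap ⁻¹' E₁) := measure_mono hEsub
      _ ≤ volume E₁ + volume (Prod.swap ⁻¹' E₁) := measure_union_le _ _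
      _ = 2 * volume E₁ := by rw [hswap, two_mul]
  -- step C : Fubini
  have hfub : volume E₁ = ∫⁻ y, volume ((fun x => (x, y)) ⁻¹' E₁) := by
    rw [Measure.volume_eq_prod]
    exact Measure.prod_apply_symm hE₁
  -- setup for section bounds
  set A : ℝ := ε/(2*π) with hAdef
  have hA : 0 < A := by positivity
  have hA12 : A ≤ 1/2 := by
    rw [hAdef, div_le_iff₀ (by positivity)]
    nlinarith
  set h : ℝ → ℝ → ENNReal := fun c y =>
    (Ico (0:ℝ) 1).indicator (fun y => min 1 (ENNReal.ofReal (A/|y - c|))) y with hdef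
  have hnull : volume {y : ℝ | Real.sin (2*π*y) = 0} = 0 := by
    have hsub0 : {y : ℝ | Real.sin (2*π*y) = 0} ⊆ Set.range (fun n : ℤ => (n:ℝ)/2) := by
      intro y hy
      simp only [mem_setOf_eq] at hy
      obtain ⟨n, hn⟩ := Real.sin_eq_zero_iff.mp hy
      refine ⟨n, ?_⟩
      have h2 : (n:ℝ) = 2*y := by
        have : (n:ℝ)*π = (2*y)*π := by linarith
        exact mul_right_cancel₀ (ne_of_gt hπ) this
      simp only []
      linarith
    exact measure_mono_null hsub0 ((Set.countable_range _).measure_zero _)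
  have haeneq : ∀ᵐ y : ℝ, Real.sin (2*π*y) ≠ 0 := by
    rw [ae_iff]; simpa using hnull
  have hae : ∀ᵐ y : ℝ, volume ((fun x => (x, y)) ⁻¹' E₁) ≤ h 0 y + h (1/2) y + h 1 y := by
    filter_upwards [haeneq] with y hy
    by_cases hyI : y ∈ Ico (0:ℝ) 1
    swap
    · have hempty : ((fun x => (x, y)) ⁻¹' E₁) = ∅ := by
        ext x
        simp only [mem_preimage, mem_empty_iff_false, iff_false]
        rintro ⟨⟨⟨_, hy2⟩, _⟩, _⟩
        exact hyI hy2
      rw [hempty]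
      simp
    · set s₀ := |Real.sin (2*π*y)| with hs0def
      have hs₀pos : 0 < s₀ := abs_pos.mpr hy
      set a := -Real.cos (2*π*y) - ρ - ε with hadef
      set b := -Real.cos (2*π*y) - ρ + ε with hbdef
      have hsub' : ((fun x => (x, y)) ⁻¹' E₁)
          ⊆ {x : ℝ | x ∈ Ico (0:ℝ) 1 ∧ Real.cos (2*π*x) ∈ Icc a b ∧ s₀ ≤ |Real.sin (2*π*x)|} := by
        rintro x ⟨⟨⟨hx1, _⟩, habs⟩, hsin⟩
        simp only [mem_setOf_eq] at habs
        obtain ⟨hl, hr⟩ := abs_le.mp habs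
        exact ⟨hx1, ⟨by rw [hadef]; linarith, by rw [hbdef]; linarith⟩, hsin⟩
      have hb1 : volume ((fun x => (x, y)) ⁻¹' E₁) ≤ ENNReal.ofReal (2*ε/(π*s₀)) := by
        refine le_trans (measure_mono hsub') ?_
        have := fiber_bound a b s₀ hs₀pos
        rwa [show b - a = 2*ε by rw [hadef, hbdef]; ring] at this
      have hb2 : volume ((fun x => (x, y)) ⁻¹' E₁) ≤ 1 := by
        refine le_trans (measure_mono (fun x hx => (hsub' hx).1)) ?_
        simp [Real.volume_Ico]
      set d := min (min |y| |y - 1/2|) |y - 1| with hddef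
      have h4d : 4*d ≤ s₀ := sin_lower hyI.1 hyI.2.le
      have hy0 : y ≠ 0 := by
        rintro rfl; exact hy (by norm_num)
      have hyh : y ≠ 1/2 := by
        rintro rfl; exact hy (by rw [show 2*π*(1/2:ℝ) = π by ring, Real.sin_pi])
      have hy1 : y ≠ 1 := by
        rintro rfl; exact hy (by rw [show 2*π*(1:ℝ) = 2*π by ring, Real.sin_two_pi])
      have hd0 : 0 < d := by
        refine lt_min (lt_min (abs_pos.mpr hy0) (abs_pos.mpr (sub_ne_zero.mpr hyh)))
          (abs_pos.mpr (sub_ne_zero.mpr hy1))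
      have hmono : 2*ε/(π*s₀) ≤ A/d := by
        rw [div_le_div_iff₀ (by positivity) hd0, hAdef]
        have : A*(π*s₀) = ε*s₀/2 := by rw [hAdef]; field_simp
        nlinarith
      have hchain : volume ((fun x => (x, y)) ⁻¹' E₁) ≤ min 1 (ENNReal.ofReal (A/d)) :=
        le_min hb2 (hb1.trans (ENNReal.ofReal_le_ofReal hmono))
      have hcase : d = |y - 0| ∨ d = |y - 1/2| ∨ d = |y - 1| := by
        rw [sub_zero]
        rcases min_cases (min |y| |y - 1/2|) |y - 1| with ⟨h1, _⟩ | ⟨h1, _⟩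
        · rcases min_cases |y| |y - 1/2| with ⟨h2, _⟩ | ⟨h2, _⟩
          · exact Or.inl (h1.trans h2)
          · exact Or.inr (Or.inl (h1.trans h2))
        · exact Or.inr (Or.inr h1)
      have hval : ∀ c : ℝ, h c y = min 1 (ENNReal.ofReal (A/|y - c|)) := by
        intro c; rw [hdef]; exact indicator_of_mem hyI _
      rcases hcase with hc | hc | hc
      · calc volume ((fun x => (x, y)) ⁻¹' E₁) ≤ min 1 (ENNReal.ofReal (A/d)) := hchain
          _ = h 0 y := by rw [hval, hc]
          _ ≤ h 0 y + h (1/2) y + h 1 y := le_add_right (le_add_right le_rfl)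
      · calc volume ((fun x => (x, y)) ⁻¹' E₁) ≤ min 1 (ENNReal.ofReal (A/d)) := hchain
          _ = h (1/2) y := by rw [hval, hc]
          _ ≤ h 0 y + h (1/2) y + h 1 y := le_add_right (le_add_left le_rfl)
      · calc volume ((fun x => (x, y)) ⁻¹' E₁) ≤ min 1 (ENNReal.ofReal (A/d)) := hchain
          _ = h 1 y := by rw [hval, hc]
          _ ≤ h 0 y + h (1/2) y + h 1 y := le_add_left le_rfl
  have hmeas_h : ∀ c : ℝ, Measurable (h c) := by
    intro c
    apply Measurable.indicator _ measurableSet_Ico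
    exact measurable_const.min
      ((measurable_const.div ((measurable_id.sub_const c).abs)).ennreal_ofReal)
  set J₀ := ENNReal.ofReal (2*A + 2*A*Real.log (1/A)) with hJ0def
  have hintbound : volume E₁ ≤ J₀ + J₀ + J₀ := by
    calc volume E₁ = ∫⁻ y, volume ((fun x => (x, y)) ⁻¹' E₁) := hfub
      _ ≤ ∫⁻ y, (h 0 y + h (1/2) y + h 1 y) := lintegral_mono_ae hae
      _ = (∫⁻ y, h 0 y) + (∫⁻ y, h (1/2) y) + ∫⁻ y, h 1 y := by
          rw [lintegral_add_right _ (hmeas_h 1), lintegral_add_right _ (hmeas_h (1/2))]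
      _ ≤ J₀ + J₀ + J₀ := by
          refine add_le_add (add_le_add ?_ ?_) ?_
          · exact center_int A 0 hA hA12 le_rfl zero_le_one
          · exact center_int A (1/2) hA hA12 (by norm_num) (by norm_num)
          · exact center_int A 1 hA hA12 zero_le_one le_rfl
  -- final arithmetic
  have hlogA0 : 0 ≤ Real.log (1/A) := Real.log_nonneg (by rw [le_div_iff₀ hA]; linarith)
  have hX0 : 0 ≤ 2*A + 2*A*Real.log (1/A) := by positivity
  have hlogε : Real.log ε < 0 := Real.log_neg hε (by linarith)
  have habslog : |Real.log ε| = -Real.log ε := abs_of_neg hlogε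
  have hL1 : 1 ≤ -Real.log ε := by
    have h3 : Real.log ε ≤ Real.log (1/3) := Real.log_le_log hε hε3
    have hlog3 : (1:ℝ) ≤ Real.log 3 := by
      rw [Real.le_log_iff_exp_le (by norm_num)]
      exact (Real.exp_one_lt_d9.le.trans (by norm_num))
    rw [one_div, Real.log_inv] at h3
    linarith
  have hlogAval : Real.log (1/A) = Real.log (2*π) - Real.log ε := by
    rw [show (1:ℝ)/A = (2*π)/ε by rw [hAdef]; field_simp, Real.log_div (by positivity) (ne_of_gt hε)]
  have hlog2π : Real.log (2*π) ≤ 2*π - 1 := Real.log_le_sub_one_of_pos (by positivity)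
  have hlog2π0 : 0 ≤ Real.log (2*π) := Real.log_nonneg (by nlinarith)
  have hreal : 2*(2*A + 2*A*Real.log (1/A) + (2*A + 2*A*Real.log (1/A)) + (2*A + 2*A*Real.log (1/A)))
      ≤ 100 * ε * |Real.log ε| := by
    rw [habslog, hlogAval, hAdef]
    set L := -Real.log ε with hLdef
    have hAL : Real.log (2*π) - Real.log ε = Real.log (2*π) + L := by rw [hLdef]; ring
    rw [hAL]
    have hL0 : (0:ℝ) ≤ L := by linarith
    have hεL : 0 ≤ ε * L := mul_nonneg hε.le hL0
    have hsum : 1 + Real.log (2*π) + L ≤ 2*π*L + L := by nlinarith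
    have key : ε/(2*π) * (1 + Real.log (2*π) + L) ≤ 3 * (ε*L) := by
      rw [div_mul_eq_mul_div, div_le_iff₀ (by positivity)]
      have h1 : ε * (1 + Real.log (2*π) + L) ≤ ε * (2*π*L + L) :=
        mul_le_mul_of_nonneg_left hsum hε.le
      nlinarith [mul_nonneg hεL (by linarith : (0:ℝ) ≤ 4*π - 1)]
    calc 2*(2*(ε/(2*π)) + 2*(ε/(2*π))*(Real.log (2*π) + L)
          + (2*(ε/(2*π)) + 2*(ε/(2*π))*(Real.log (2*π) + L))
          + (2*(ε/(2*π)) + 2*(ε/(2*π))*(Real.log (2*π) + L)))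
        = 12 * (ε/(2*π) * (1 + Real.log (2*π) + L)) := by ring
      _ ≤ 12 * (3 * (ε*L)) := by linarith
      _ ≤ 100 * ε * L := by nlinarith
  calc volume {p ∈ box2 | |disp2D p - ρ| ≤ ε} = volume E := hvolE
    _ ≤ 2 * volume E₁ := hdouble
    _ ≤ 2 * (J₀ + J₀ + J₀) := by gcongr
    _ = ENNReal.ofReal (2*(2*A + 2*A*Real.log (1/A) + (2*A + 2*A*Real.log (1/A)) + (2*A + 2*A*Real.log (1/A)))) := by
        rw [hJ0def, ← ENNReal.ofReal_add hX0 hX0, ← ENNReal.ofReal_add (by linarith) hX0,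
          ← ENNReal.ofReal_ofNat 2, ← ENNReal.ofReal_mul (by norm_num)]
    _ ≤ ENNReal.ofReal (100 * ε * |Real.log ε|) := ENNReal.ofReal_le_ofReal hreal
end

section
/- Let K : ℝ³ × ℤ³ → ℂ be such that for each w ∈ ℤ³ the map X ↦ K(X,w) is continuously differentiable, and assume Σ_{w∈ℤ³} sup_{X∈ℝ³} |K(X,w)| < ∞ and A := Σ_{w∈ℤ³} sup_{X∈ℝ³} (1 + |X|)·|∇_X K(X,w)| < ∞. Then for every ψ ∈ ℓ²(ℤ³), the double sum F(η) := Σ_{y,z∈ℤ³} K(η(y+z)/2, z−y) · conj(ψ(y)) · ψ(z) converges absolutely for every η > 0, the function F is differentiable on (0,∞), and |F′(η)| ≤ A · ‖ψ‖²_{ℓ²} / η for all η > 0. -/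
open MeasureTheory Real ENNReal

/-- The Euclidean norm on `ℝ³` (realized as `Fin 3 → ℝ`). -/
noncomputable def eunorm3 (x : Fin 3 → ℝ) : ℝ := Real.sqrt (∑ i, x i ^ 2)

lemma norm_le_eunorm3 (x : Fin 3 → ℝ) : ‖x‖ ≤ eunorm3 x := by
  rw [eunorm3, pi_norm_le_iff_of_nonneg (Real.sqrt_nonneg _)]
  intro i
  rw [Real.norm_eq_abs, ← Real.sqrt_sq_eq_abs]
  exact Real.sqrt_le_sqrt (Finset.single_le_sum (fun j _ => sq_nonneg (x j)) (Finset.mem_univ i))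

lemma lp2_summable_sq (ψ : lp (fun _ : Fin 3 → ℤ => ℂ) 2) :
    Summable fun y => ‖ψ y‖ ^ 2 := by
  have h := (lp.memℓp ψ).summable (p := 2) (by norm_num)
  have : ∀ y : Fin 3 → ℤ, ‖ψ y‖ ^ ((2:ℝ≥0∞).toReal) = ‖ψ y‖ ^ 2 := by
    intro y
    rw [show ((2:ℝ≥0∞).toReal) = ((2:ℕ):ℝ) by norm_num, Real.rpow_natCast]
  simpa [this] using h

lemma lp2_tsum_sq (ψ : lp (fun _ : Fin 3 → ℤ => ℂ) 2) :
    ∑' y, ‖ψ y‖ ^ 2 = ‖ψ‖ ^ 2 := by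
  have h := lp.norm_rpow_eq_tsum (p := 2) (by norm_num) ψ
  have e2 : ∀ t : ℝ, t ^ ((2:ℝ≥0∞).toReal) = t ^ 2 := by
    intro t
    rw [show ((2:ℝ≥0∞).toReal) = ((2:ℕ):ℝ) by norm_num, Real.rpow_natCast]
  rw [e2] at h
  simp only [e2] at h
  exact h.symm

lemma inner_shift_bound (ψ : lp (fun _ : Fin 3 → ℤ => ℂ) 2) (w : Fin 3 → ℤ) :
    Summable (fun y : Fin 3 → ℤ => ‖ψ y‖ * ‖ψ (y + w)‖) ∧
    ∑' y : Fin 3 → ℤ, ‖ψ y‖ * ‖ψ (y + w)‖ ≤ ‖ψ‖ ^ 2 := by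
  have hsq := lp2_summable_sq ψ
  have hshift : Summable fun y : Fin 3 → ℤ => ‖ψ (y + w)‖ ^ 2 := by
    exact ((Equiv.addRight w).summable_iff (f := fun y => ‖ψ y‖ ^ 2)).mpr hsq
  have hmaj : Summable fun y : Fin 3 → ℤ => (‖ψ y‖ ^ 2 + ‖ψ (y + w)‖ ^ 2) / 2 :=
    (hsq.add hshift).div_const 2
  have hle : ∀ y : Fin 3 → ℤ, ‖ψ y‖ * ‖ψ (y + w)‖ ≤ (‖ψ y‖ ^ 2 + ‖ψ (y + w)‖ ^ 2) / 2 := by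
    intro y
    nlinarith [sq_nonneg (‖ψ y‖ - ‖ψ (y + w)‖)]
  have hsummable : Summable (fun y : Fin 3 → ℤ => ‖ψ y‖ * ‖ψ (y + w)‖) :=
    Summable.of_nonneg_of_le (fun y => mul_nonneg (norm_nonneg _) (norm_nonneg _)) hle hmaj
  refine ⟨hsummable, ?_⟩
  have htsum_shift : ∑' y : Fin 3 → ℤ, ‖ψ (y + w)‖ ^ 2 = ∑' y : Fin 3 → ℤ, ‖ψ y‖ ^ 2 :=
    (Equiv.addRight w).tsum_eq (f := fun y => ‖ψ y‖ ^ 2)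
  calc ∑' y : Fin 3 → ℤ, ‖ψ y‖ * ‖ψ (y + w)‖
      ≤ ∑' y : Fin 3 → ℤ, (‖ψ y‖ ^ 2 + ‖ψ (y + w)‖ ^ 2) / 2 :=
        Summable.tsum_le_tsum hle hsummable hmaj
    _ = ((∑' y : Fin 3 → ℤ, ‖ψ y‖ ^ 2) + ∑' y : Fin 3 → ℤ, ‖ψ (y + w)‖ ^ 2) / 2 := by
        rw [tsum_div_const, Summable.tsum_add hsq hshift]
    _ = ‖ψ‖ ^ 2 := by rw [htsum_shift, lp2_tsum_sq]; ring

noncomputable def shiftEquiv3 : ((Fin 3 → ℤ) × (Fin 3 → ℤ)) ≃ ((Fin 3 → ℤ) × (Fin 3 → ℤ)) where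
  toFun p := (p.2, p.2 + p.1)
  invFun p := (p.2 - p.1, p.1)
  left_inv p := by simp
  right_inv p := by simp

lemma aux_sum (ψ : lp (fun _ : Fin 3 → ℤ => ℂ) 2) (c : (Fin 3 → ℤ) → ℝ)
    (hc : ∀ w, 0 ≤ c w) (hcs : Summable c) :
    Summable (fun yz : (Fin 3 → ℤ) × (Fin 3 → ℤ) => c (yz.2 - yz.1) * ‖ψ yz.1‖ * ‖ψ yz.2‖) ∧
    ∑' yz : (Fin 3 → ℤ) × (Fin 3 → ℤ), c (yz.2 - yz.1) * ‖ψ yz.1‖ * ‖ψ yz.2‖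
      ≤ (∑' w, c w) * ‖ψ‖ ^ 2 := by
  set f : (Fin 3 → ℤ) × (Fin 3 → ℤ) → ℝ :=
    fun yz => c (yz.2 - yz.1) * ‖ψ yz.1‖ * ‖ψ yz.2‖ with hf
  have hfe : ∀ p : (Fin 3 → ℤ) × (Fin 3 → ℤ),
      f (shiftEquiv3 p) = c p.1 * (‖ψ p.2‖ * ‖ψ (p.2 + p.1)‖) := by
    intro p
    simp [hf, shiftEquiv3, mul_assoc]
  have hnn : ∀ p : (Fin 3 → ℤ) × (Fin 3 → ℤ), 0 ≤ (f ∘ shiftEquiv3) p := by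
    intro p
    rw [Function.comp_apply, hfe]
    exact mul_nonneg (hc _) (mul_nonneg (norm_nonneg _) (norm_nonneg _))
  have hfib : ∀ w : Fin 3 → ℤ, Summable fun y => (f ∘ shiftEquiv3) (w, y) := by
    intro w
    have : (fun y => (f ∘ shiftEquiv3) (w, y)) =
        fun y => c w * (‖ψ y‖ * ‖ψ (y + w)‖) := by
      funext y; exact hfe (w, y)
    rw [this]
    exact (inner_shift_bound ψ w).1.mul_left (c w)
  have hfibsum : ∀ w : Fin 3 → ℤ,
      ∑' y, (f ∘ shiftEquiv3) (w, y) ≤ c w * ‖ψ‖ ^ 2 := by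
    intro w
    have h1 : (fun y => (f ∘ shiftEquiv3) (w, y)) =
        fun y => c w * (‖ψ y‖ * ‖ψ (y + w)‖) := by
      funext y; exact hfe (w, y)
    rw [h1, tsum_mul_left]
    exact mul_le_mul_of_nonneg_left (inner_shift_bound ψ w).2 (hc w)
  have houter : Summable fun w : Fin 3 → ℤ => ∑' y, (f ∘ shiftEquiv3) (w, y) :=
    Summable.of_nonneg_of_le (fun w => tsum_nonneg (fun y => hnn (w, y))) hfibsum
      (hcs.mul_right (‖ψ‖ ^ 2))
  have hcomp : Summable (f ∘ shiftEquiv3) :=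
    (summable_prod_of_nonneg hnn).mpr ⟨hfib, houter⟩
  have hsumf : Summable f := (shiftEquiv3.summable_iff).mp hcomp
  refine ⟨hsumf, ?_⟩
  have h2 : ∑' p, f p = ∑' p, (f ∘ shiftEquiv3) p := (shiftEquiv3.tsum_eq f).symm
  rw [h2, Summable.tsum_prod' hcomp hfib]
  calc ∑' w, ∑' y, (f ∘ shiftEquiv3) (w, y)
      ≤ ∑' w, c w * ‖ψ‖ ^ 2 :=
        Summable.tsum_le_tsum hfibsum houter (hcs.mul_right _)
    _ = (∑' w, c w) * ‖ψ‖ ^ 2 := tsum_mul_right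

noncomputable def wterm (K : (Fin 3 → ℝ) → (Fin 3 → ℤ) → ℂ)
    (ψ : lp (fun _ : Fin 3 → ℤ => ℂ) 2)
    (yz : (Fin 3 → ℤ) × (Fin 3 → ℤ)) (η : ℝ) : ℂ :=
  K ((η / 2) • fun i => ((yz.1 i + yz.2 i : ℤ) : ℝ)) (yz.2 - yz.1) *
    (starRingEnd ℂ) (ψ yz.1) * ψ yz.2

noncomputable def wterm' (K : (Fin 3 → ℝ) → (Fin 3 → ℤ) → ℂ)
    (ψ : lp (fun _ : Fin 3 → ℤ => ℂ) 2)
    (yz : (Fin 3 → ℤ) × (Fin 3 → ℤ)) (η : ℝ) : ℂ :=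
  (fderiv ℝ (fun X' => K X' (yz.2 - yz.1))
      ((η / 2) • fun i => ((yz.1 i + yz.2 i : ℤ) : ℝ)))
      ((1 / 2 : ℝ) • fun i => ((yz.1 i + yz.2 i : ℤ) : ℝ)) *
    (starRingEnd ℂ) (ψ yz.1) * ψ yz.2

theorem wigner_test_derivative_bound
    (K : (Fin 3 → ℝ) → (Fin 3 → ℤ) → ℂ)
    (hK1 : ∀ w, ContDiff ℝ 1 (fun X => K X w))
    (hbdd : ∀ w : Fin 3 → ℤ, BddAbove (Set.range fun X => ‖K X w‖))
    (hsum : Summable fun w : Fin 3 → ℤ => ⨆ X : Fin 3 → ℝ, ‖K X w‖)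
    (hbddD : ∀ w : Fin 3 → ℤ, BddAbove (Set.range fun X : Fin 3 → ℝ =>
      (1 + eunorm3 X) * ‖fderiv ℝ (fun X' => K X' w) X‖))
    (hsumD : Summable fun w : Fin 3 → ℤ => ⨆ X : Fin 3 → ℝ,
      (1 + eunorm3 X) * ‖fderiv ℝ (fun X' => K X' w) X‖)
    (A : ℝ)
    (hA : A = ∑' w : Fin 3 → ℤ, ⨆ X : Fin 3 → ℝ,
      (1 + eunorm3 X) * ‖fderiv ℝ (fun X' => K X' w) X‖)
    (ψ : lp (fun _ : Fin 3 → ℤ => ℂ) 2)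
    (F : ℝ → ℂ)
    (hF : ∀ η : ℝ, F η = ∑' yz : (Fin 3 → ℤ) × (Fin 3 → ℤ),
      K ((η / 2) • fun i => ((yz.1 i + yz.2 i : ℤ) : ℝ)) (yz.2 - yz.1) *
        (starRingEnd ℂ) (ψ yz.1) * ψ yz.2) :
    (∀ η : ℝ, 0 < η → Summable fun yz : (Fin 3 → ℤ) × (Fin 3 → ℤ) =>
        ‖K ((η / 2) • fun i => ((yz.1 i + yz.2 i : ℤ) : ℝ)) (yz.2 - yz.1) *
          (starRingEnd ℂ) (ψ yz.1) * ψ yz.2‖) ∧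
    (∀ η : ℝ, 0 < η → DifferentiableAt ℝ F η) ∧
    (∀ η : ℝ, 0 < η → ‖deriv F η‖ ≤ A * ‖ψ‖ ^ 2 / η) := by
  classical
  set S : (Fin 3 → ℤ) → ℝ := fun w => ⨆ X : Fin 3 → ℝ, ‖K X w‖ with hSdef
  set D : (Fin 3 → ℤ) → ℝ := fun w => ⨆ X : Fin 3 → ℝ,
    (1 + eunorm3 X) * ‖fderiv ℝ (fun X' => K X' w) X‖ with hDdef
  have hSnn : ∀ w, 0 ≤ S w := fun w =>
    le_trans (norm_nonneg (K 0 w)) (le_ciSup (hbdd w) 0)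
  have hDnn : ∀ w, 0 ≤ D w := by
    intro w
    refine le_trans ?_ (le_ciSup (hbddD w) 0)
    have : 0 ≤ eunorm3 (0 : Fin 3 → ℝ) := Real.sqrt_nonneg _
    have h2 : (0:ℝ) ≤ 1 + eunorm3 (0 : Fin 3 → ℝ) := by linarith
    exact mul_nonneg h2 (norm_nonneg _)
  -- pointwise bound on the terms
  have habs : ∀ (yz : (Fin 3 → ℤ) × (Fin 3 → ℤ)) (η : ℝ),
      ‖wterm K ψ yz η‖ ≤ S (yz.2 - yz.1) * ‖ψ yz.1‖ * ‖ψ yz.2‖ := by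
    intro yz η
    rw [wterm, norm_mul, norm_mul, RCLike.norm_conj]
    have h1 : ‖K ((η / 2) • fun i => ((yz.1 i + yz.2 i : ℤ) : ℝ)) (yz.2 - yz.1)‖
        ≤ S (yz.2 - yz.1) := by
      exact le_ciSup (hbdd (yz.2 - yz.1)) _
    exact mul_le_mul_of_nonneg_right
      (mul_le_mul_of_nonneg_right h1 (norm_nonneg _)) (norm_nonneg _)
  -- derivative of the terms
  have hg : ∀ (yz : (Fin 3 → ℤ) × (Fin 3 → ℤ)) (η : ℝ),
      HasDerivAt (fun x => wterm K ψ yz x) (wterm' K ψ yz η) η := by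
    intro yz η
    have h0 : HasDerivAt (fun x : ℝ => (x / 2) • (fun i => ((yz.1 i + yz.2 i : ℤ) : ℝ)))
        ((1 / 2 : ℝ) • (fun i => ((yz.1 i + yz.2 i : ℤ) : ℝ))) η :=
      ((hasDerivAt_id η).div_const 2).smul_const _
    have h1 : HasFDerivAt (fun X' => K X' (yz.2 - yz.1))
        (fderiv ℝ (fun X' => K X' (yz.2 - yz.1))
          ((η / 2) • fun i => ((yz.1 i + yz.2 i : ℤ) : ℝ)))
        ((η / 2) • fun i => ((yz.1 i + yz.2 i : ℤ) : ℝ)) :=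
      (((hK1 (yz.2 - yz.1)).differentiable one_ne_zero) _).hasFDerivAt
    exact ((h1.comp_hasDerivAt η h0).mul_const _).mul_const _
  -- bound on the derivative of the terms
  have hbound : ∀ (yz : (Fin 3 → ℤ) × (Fin 3 → ℤ)) (x : ℝ), 0 < x →
      ‖wterm' K ψ yz x‖ ≤ (x⁻¹ * D (yz.2 - yz.1)) * ‖ψ yz.1‖ * ‖ψ yz.2‖ := by
    intro yz x hx
    rw [wterm', norm_mul, norm_mul, RCLike.norm_conj]
    set v : Fin 3 → ℝ := fun i => ((yz.1 i + yz.2 i : ℤ) : ℝ) with hvdef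
    set X : Fin 3 → ℝ := (x / 2) • v with hXdef
    set L := fderiv ℝ (fun X' => K X' (yz.2 - yz.1)) X with hLdef
    have key : ‖L ((1 / 2 : ℝ) • v)‖ ≤ x⁻¹ * D (yz.2 - yz.1) := by
      have h2 : ‖L ((1 / 2 : ℝ) • v)‖ ≤ ‖L‖ * ‖(1 / 2 : ℝ) • v‖ := L.le_opNorm _
      have h3 : ‖(1 / 2 : ℝ) • v‖ = x⁻¹ * ‖X‖ := by
        have hX : X = x • ((1 / 2 : ℝ) • v) := by
          rw [hXdef, smul_smul]; congr 1; ring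
        rw [hX, norm_smul x ((1 / 2 : ℝ) • v), Real.norm_eq_abs, abs_of_pos hx]
        field_simp
      have h4 : ‖L‖ * ‖X‖ ≤ (1 + eunorm3 X) * ‖L‖ := by
        rw [mul_comm]
        have := norm_le_eunorm3 X
        have h0 : (0:ℝ) ≤ eunorm3 X := Real.sqrt_nonneg _
        exact mul_le_mul_of_nonneg_right (by linarith) (norm_nonneg _)
      have h5 : (1 + eunorm3 X) * ‖L‖ ≤ D (yz.2 - yz.1) := le_ciSup (hbddD _) X
      calc ‖L ((1 / 2 : ℝ) • v)‖ ≤ ‖L‖ * (x⁻¹ * ‖X‖) := by rw [← h3]; exact h2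
        _ = x⁻¹ * (‖L‖ * ‖X‖) := by ring
        _ ≤ x⁻¹ * ((1 + eunorm3 X) * ‖L‖) :=
            mul_le_mul_of_nonneg_left h4 (inv_nonneg.mpr hx.le)
        _ ≤ x⁻¹ * D (yz.2 - yz.1) :=
            mul_le_mul_of_nonneg_left h5 (inv_nonneg.mpr hx.le)
    exact mul_le_mul_of_nonneg_right
      (mul_le_mul_of_nonneg_right key (norm_nonneg _)) (norm_nonneg _)
  -- summability of the terms
  have hterm_summable : ∀ η : ℝ, Summable fun yz => wterm K ψ yz η := by
    intro η
    exact Summable.of_norm_bounded (aux_sum ψ S hSnn hsum).1 (fun yz => habs yz η)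
  -- differentiability of the sum
  have hderF : ∀ η : ℝ, 0 < η → HasDerivAt F (∑' yz, wterm' K ψ yz η) η := by
    intro η hη
    have hu : Summable fun yz : (Fin 3 → ℤ) × (Fin 3 → ℤ) =>
        ((2 / η) * D (yz.2 - yz.1)) * ‖ψ yz.1‖ * ‖ψ yz.2‖ :=
      (aux_sum ψ (fun w => (2 / η) * D w)
        (fun w => mul_nonneg (by positivity) (hDnn w)) (hsumD.mul_left _)).1
    have hmem : η ∈ Set.Ioi (η / 2) := by
      simp only [Set.mem_Ioi]; linarith
    have hFg : F = fun z => ∑' yz, wterm K ψ yz z := by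
      funext z; exact hF z
    rw [hFg]
    refine hasDerivAt_tsum_of_isPreconnected hu isOpen_Ioi
      (convex_Ioi _).isPreconnected (fun yz x _ => hg yz x) ?_ hmem
      (hterm_summable η) hmem
    intro yz x hx
    rw [Set.mem_Ioi] at hx
    have hx0 : 0 < x := lt_trans (by linarith) hx
    refine le_trans (hbound yz x hx0) ?_
    have hxinv : x⁻¹ ≤ 2 / η := by
      have h1 : x⁻¹ ≤ (η / 2)⁻¹ := inv_anti₀ (by linarith) hx.le
      calc x⁻¹ ≤ (η / 2)⁻¹ := h1
        _ = 2 / η := by rw [inv_div]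
    exact mul_le_mul_of_nonneg_right
      (mul_le_mul_of_nonneg_right
        (mul_le_mul_of_nonneg_right hxinv (hDnn _)) (norm_nonneg _)) (norm_nonneg _)
  refine ⟨?_, fun η hη => (hderF η hη).differentiableAt, ?_⟩
  · intro η _
    have heq : (fun yz : (Fin 3 → ℤ) × (Fin 3 → ℤ) =>
        ‖K ((η / 2) • fun i => ((yz.1 i + yz.2 i : ℤ) : ℝ)) (yz.2 - yz.1) *
          (starRingEnd ℂ) (ψ yz.1) * ψ yz.2‖) = fun yz => ‖wterm K ψ yz η‖ := by
      funext yz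
      rw [wterm]
    rw [heq]
    exact (hterm_summable η).norm
  · intro η hη
    have hc' : ∀ w, 0 ≤ η⁻¹ * D w :=
      fun w => mul_nonneg (inv_nonneg.mpr hη.le) (hDnn w)
    have haux := aux_sum ψ (fun w => η⁻¹ * D w) hc' (hsumD.mul_left _)
    have hnormsummable : Summable fun yz => ‖wterm' K ψ yz η‖ :=
      Summable.of_nonneg_of_le (fun yz => norm_nonneg _)
        (fun yz => hbound yz η hη) haux.1
    rw [(hderF η hη).deriv]
    calc ‖∑' yz, wterm' K ψ yz η‖ ≤ ∑' yz, ‖wterm' K ψ yz η‖ :=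
          norm_tsum_le_tsum_norm hnormsummable
      _ ≤ ∑' yz : (Fin 3 → ℤ) × (Fin 3 → ℤ),
            (η⁻¹ * D (yz.2 - yz.1)) * ‖ψ yz.1‖ * ‖ψ yz.2‖ :=
          Summable.tsum_le_tsum (fun yz => hbound yz η hη) hnormsummable haux.1
      _ ≤ (∑' w, η⁻¹ * D w) * ‖ψ‖ ^ 2 := haux.2
      _ = A * ‖ψ‖ ^ 2 / η := by
          rw [tsum_mul_left, hA]
          field_simp
end

section
/- Let h : ℝ³ → ℂ and S : ℝ³ → ℝ be Schwartz functions, and for η > 0 define the WKB state φ^{(η)} ∈ ℓ²(ℤ³) by φ^{(η)}(x) = η^{3/2} · h(ηx) · exp(i·S(ηx)/η) for x ∈ ℤ³. Then there is a constant C < ∞, depending only on h and S, such that the map η ↦ φ^{(η)} from (0,1] to ℓ²(ℤ³) is differentiable and ‖(d/dη) φ^{(η)}‖_{ℓ²(ℤ³)} ≤ C/η² for all η ∈ (0,1]. -/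
open MeasureTheory Real

namespace WKBAux

noncomputable section

/-! ### 1D summability weights -/

/-- one-dimensional weight -/
def g1 (c : ℝ) (n : ℤ) : ℝ := ((1 + c * |(n : ℝ)|) ^ 2)⁻¹

/-- nat version -/
def q1 (c : ℝ) (n : ℕ) : ℝ := ((1 + c * n) ^ 2)⁻¹

lemma q1_nonneg {c : ℝ} (hc : 0 < c) (n : ℕ) : 0 ≤ q1 c n := by
  have : (0:ℝ) < 1 + c * n := by positivity
  unfold q1; positivity

lemma hasSum_tele {c : ℝ} (hc : 0 < c) :
    HasSum (fun n : ℕ => (1 + c * n)⁻¹ - (1 + c * (n + 1))⁻¹) 1 := by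
  have hpos : ∀ n : ℕ, (0:ℝ) < 1 + c * n := fun n => by positivity
  have hnn : ∀ n : ℕ, 0 ≤ (1 + c * n)⁻¹ - (1 + c * (n + 1))⁻¹ := by
    intro n
    have h1 : (1 + c * n : ℝ) ≤ 1 + c * (n + 1) := by nlinarith [hc.le]
    have := inv_anti₀ (hpos n) h1
    linarith
  rw [hasSum_iff_tendsto_nat_of_nonneg hnn]
  have hsum : ∀ n : ℕ, ∑ i ∈ Finset.range n, ((1 + c * i)⁻¹ - (1 + c * (i + 1))⁻¹)
      = 1 - (1 + c * n)⁻¹ := by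
    intro n
    have h := Finset.sum_range_sub' (fun i : ℕ => (1 + c * (i : ℝ))⁻¹) n
    have h2 : ∀ i : ℕ, ((1 + c * ((i : ℕ) + 1 : ℕ) : ℝ))⁻¹ = (1 + c * ((i : ℝ) + 1))⁻¹ := by
      intro i; push_cast; ring_nf
    calc ∑ i ∈ Finset.range n, ((1 + c * (i:ℝ))⁻¹ - (1 + c * ((i:ℝ) + 1))⁻¹)
        = ∑ i ∈ Finset.range n, ((1 + c * (i:ℝ))⁻¹ - (1 + c * (((i + 1 : ℕ)):ℝ))⁻¹) := by
          apply Finset.sum_congr rfl; intro i _; push_cast; ring_nf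
      _ = (1 + c * ((0:ℕ):ℝ))⁻¹ - (1 + c * (n:ℝ))⁻¹ := h
      _ = 1 - (1 + c * (n:ℝ))⁻¹ := by norm_num
  simp only [hsum]
  have htend : Filter.Tendsto (fun n : ℕ => (1 + c * (n:ℝ))⁻¹) Filter.atTop (nhds 0) := by
    apply Filter.Tendsto.inv_tendsto_atTop
    apply Filter.tendsto_atTop_add_const_left
    exact (tendsto_natCast_atTop_atTop).const_mul_atTop hc
  simpa using (tendsto_const_nhds.sub htend)

lemma q1_succ_le {c : ℝ} (hc : 0 < c) (n : ℕ) :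
    q1 c (n + 1) ≤ (1 / c) * ((1 + c * n)⁻¹ - (1 + c * (n + 1))⁻¹) := by
  set a : ℝ := 1 + c * n with ha
  set b : ℝ := 1 + c * (n + 1) with hb
  have hA : (0:ℝ) < a := by positivity
  have hB : (0:ℝ) < b := by
    have h0 : (0:ℝ) ≤ c * (n+1) := by positivity
    simp only [hb]; linarith
  have hab : a ≤ b := by simp only [ha, hb]; nlinarith [hc.le]
  have h1 : a⁻¹ - b⁻¹ = c * (a * b)⁻¹ := by
    field_simp
    simp only [ha, hb]; ring
  have h2 : (b ^ 2)⁻¹ ≤ (a * b)⁻¹ := by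
    apply inv_anti₀ (by positivity)
    nlinarith
  have hq : q1 c (n + 1) = (b ^ 2)⁻¹ := by
    unfold q1; push_cast [hb]; ring_nf
  rw [hq, h1]
  rw [← mul_assoc, one_div, inv_mul_cancel₀ hc.ne', one_mul]
  exact h2

lemma summable_q1 {c : ℝ} (hc : 0 < c) : Summable (q1 c) := by
  have hs : Summable (fun n : ℕ => q1 c (n + 1)) := by
    apply Summable.of_nonneg_of_le (fun n => q1_nonneg hc _) (q1_succ_le hc)
    exact (hasSum_tele hc).summable.mul_left _
  exact (summable_nat_add_iff 1).1 hs

lemma tsum_q1_le {c : ℝ} (hc : 0 < c) : ∑' n, q1 c n ≤ 1 + 1 / c := by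
  have hsum := summable_q1 hc
  have hshift : Summable (fun n : ℕ => q1 c (n + 1)) := (summable_nat_add_iff 1).2 hsum
  rw [Summable.tsum_eq_zero_add hsum]
  have h0 : q1 c 0 = 1 := by unfold q1; norm_num
  rw [h0]
  have h1 : ∑' n : ℕ, q1 c (n + 1) ≤ 1 / c := by
    calc ∑' n : ℕ, q1 c (n + 1)
        ≤ ∑' n : ℕ, (1 / c) * ((1 + c * n)⁻¹ - (1 + c * (n + 1))⁻¹) :=
          Summable.tsum_le_tsum (q1_succ_le hc) hshift ((hasSum_tele hc).summable.mul_left _)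
      _ = (1 / c) * ∑' n : ℕ, ((1 + c * n)⁻¹ - (1 + c * (n + 1))⁻¹) := tsum_mul_left
      _ = 1 / c := by rw [(hasSum_tele hc).tsum_eq, mul_one]
  linarith

lemma g1_nat {c : ℝ} (n : ℕ) : g1 c ((n : ℤ)) = q1 c n := by
  unfold g1 q1; norm_num

lemma g1_negsucc {c : ℝ} (n : ℕ) : g1 c (-((n : ℤ) + 1)) = q1 c (n + 1) := by
  unfold g1 q1
  have : |((-((n:ℤ) + 1) : ℤ) : ℝ)| = (n : ℝ) + 1 := by
    push_cast
    rw [abs_neg, abs_of_nonneg (by positivity)]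
  rw [this]; push_cast; ring_nf

lemma g1_nonneg {c : ℝ} (hc : 0 < c) (n : ℤ) : 0 ≤ g1 c n := by
  have : (0:ℝ) < 1 + c * |(n:ℝ)| := by positivity
  unfold g1; positivity

lemma summable_g1 {c : ℝ} (hc : 0 < c) : Summable (g1 c) := by
  apply Summable.of_nat_of_neg_add_one
  · exact (summable_q1 hc).congr (fun n => (g1_nat n).symm)
  · exact ((summable_nat_add_iff 1).2 (summable_q1 hc)).congr (fun n => (g1_negsucc n).symm)

lemma tsum_g1_le {c : ℝ} (hc : 0 < c) (hc1 : c ≤ 1) : ∑' n, g1 c n ≤ 3 / c := by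
  have h1 : Summable (fun n : ℕ => g1 c (n : ℤ)) :=
    (summable_q1 hc).congr (fun n => (g1_nat n).symm)
  have h2 : Summable (fun n : ℕ => g1 c (-((n : ℤ) + 1))) :=
    ((summable_nat_add_iff 1).2 (summable_q1 hc)).congr (fun n => (g1_negsucc n).symm)
  rw [tsum_of_nat_of_neg_add_one h1 h2]
  have e1 : ∑' n : ℕ, g1 c (n : ℤ) = ∑' n, q1 c n := tsum_congr (fun n => g1_nat n)
  have e2 : ∑' n : ℕ, g1 c (-((n : ℤ) + 1)) = ∑' n : ℕ, q1 c (n + 1) :=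
    tsum_congr (fun n => g1_negsucc n)
  have h3 : ∑' n : ℕ, q1 c (n + 1) ≤ 1 / c := by
    calc ∑' n : ℕ, q1 c (n + 1)
        ≤ ∑' n : ℕ, (1 / c) * ((1 + c * n)⁻¹ - (1 + c * (n + 1))⁻¹) :=
          Summable.tsum_le_tsum (q1_succ_le hc) ((summable_nat_add_iff 1).2 (summable_q1 hc))
            ((hasSum_tele hc).summable.mul_left _)
      _ = (1 / c) * ∑' n : ℕ, ((1 + c * n)⁻¹ - (1 + c * (n + 1))⁻¹) := tsum_mul_left
      _ = 1 / c := by rw [(hasSum_tele hc).tsum_eq, mul_one]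
  have h4 : (1:ℝ) ≤ 1 / c := by
    rw [le_one_div (by norm_num) hc]; simpa using hc1
  have := tsum_q1_le hc
  rw [e1, e2]
  have : (1 : ℝ) + 1/c + 1/c ≤ 3 / c := by
    have : (3:ℝ)/c = 1/c + 1/c + 1/c := by ring
    rw [this]; linarith
  linarith [tsum_q1_le hc, h3]

/-! ### 3D weights -/

/-- the 3D weight -/
def wt (c : ℝ) (x : Fin 3 → ℤ) : ℝ := ∏ i, g1 c (x i)

lemma wt_nonneg {c : ℝ} (hc : 0 < c) (x : Fin 3 → ℤ) : 0 ≤ wt c x :=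
  Finset.prod_nonneg (fun i _ => g1_nonneg hc _)

lemma g1_le_one {c : ℝ} (hc : 0 < c) (n : ℤ) : g1 c n ≤ 1 := by
  unfold g1
  rw [inv_le_one_iff₀]
  right
  nlinarith [abs_nonneg ((n:ℝ)), hc.le, mul_nonneg hc.le (abs_nonneg ((n:ℝ)))]

lemma wt_le_one {c : ℝ} (hc : 0 < c) (x : Fin 3 → ℤ) : wt c x ≤ 1 :=
  Finset.prod_le_one (fun i _ => g1_nonneg hc _) (fun i _ => g1_le_one hc _)

lemma g1_anti {c c' : ℝ} (hc : 0 < c) (hcc : c ≤ c') (n : ℤ) : g1 c' n ≤ g1 c n := by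
  unfold g1
  apply inv_anti₀ (by positivity)
  have : c * |(n:ℝ)| ≤ c' * |(n:ℝ)| := mul_le_mul_of_nonneg_right hcc (abs_nonneg _)
  nlinarith [abs_nonneg ((n:ℝ)), mul_nonneg hc.le (abs_nonneg ((n:ℝ)))]

lemma wt_anti {c c' : ℝ} (hc : 0 < c) (hcc : c ≤ c') (x : Fin 3 → ℤ) : wt c' x ≤ wt c x :=
  Finset.prod_le_prod (fun i _ => g1_nonneg (lt_of_lt_of_le hc hcc) _)
    (fun i _ => g1_anti hc hcc _)

/-- the equivalence with ℤ × ℤ × ℤ -/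
def eqv : (Fin 3 → ℤ) ≃ ℤ × ℤ × ℤ where
  toFun x := (x 0, x 1, x 2)
  invFun p := ![p.1, p.2.1, p.2.2]
  left_inv x := by
    funext i; fin_cases i <;> rfl
  right_inv p := rfl

lemma wt_eq_comp {c : ℝ} :
    wt c = (fun p : ℤ × ℤ × ℤ => g1 c p.1 * (g1 c p.2.1 * g1 c p.2.2)) ∘ eqv := by
  funext x
  simp only [wt, Fin.prod_univ_three, Function.comp_apply, eqv, Equiv.coe_fn_mk, mul_assoc]
  rfl

lemma summable_wt {c : ℝ} (hc : 0 < c) : Summable (wt c) := by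
  rw [wt_eq_comp]
  have h1 := summable_g1 hc
  have hnn : 0 ≤ g1 c := fun n => g1_nonneg hc n
  have h2 : Summable (fun p : ℤ × ℤ => g1 c p.1 * g1 c p.2) :=
    h1.mul_of_nonneg h1 hnn hnn
  exact (Equiv.summable_iff eqv).mpr (h1.mul_of_nonneg h2 hnn (fun p => mul_nonneg (hnn _) (hnn _)))

lemma tsum_wt_le {c : ℝ} (hc : 0 < c) (hc1 : c ≤ 1) : ∑' x, wt c x ≤ 27 / c ^ 3 := by
  have h1 := summable_g1 hc
  have hnn : 0 ≤ g1 c := fun n => g1_nonneg hc n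
  have h2 : Summable (fun p : ℤ × ℤ => g1 c p.1 * g1 c p.2) :=
    h1.mul_of_nonneg h1 hnn hnn
  have h3 : Summable (fun p : ℤ × ℤ × ℤ => g1 c p.1 * (g1 c p.2.1 * g1 c p.2.2)) :=
    h1.mul_of_nonneg h2 hnn (fun p => mul_nonneg (hnn _) (hnn _))
  have e0 : ∑' x, wt c x = ∑' p : ℤ × ℤ × ℤ, g1 c p.1 * (g1 c p.2.1 * g1 c p.2.2) := by
    rw [← Equiv.tsum_eq eqv (fun p : ℤ × ℤ × ℤ => g1 c p.1 * (g1 c p.2.1 * g1 c p.2.2))]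
    exact tsum_congr (fun x => by
      simp only [wt, Fin.prod_univ_three, eqv, Equiv.coe_fn_mk, mul_assoc]; rfl)
  have e2 : (∑' n, g1 c n) * (∑' n, g1 c n) = ∑' p : ℤ × ℤ, g1 c p.1 * g1 c p.2 :=
    Summable.tsum_mul_tsum h1 h1 h2
  have e3 : (∑' n, g1 c n) * ((∑' n, g1 c n) * (∑' n, g1 c n))
      = ∑' p : ℤ × ℤ × ℤ, g1 c p.1 * (g1 c p.2.1 * g1 c p.2.2) := by
    rw [e2]
    exact Summable.tsum_mul_tsum h1 h2 h3
  rw [e0, ← e3]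
  have hA0 : 0 ≤ ∑' n, g1 c n := tsum_nonneg hnn
  have hA : ∑' n, g1 c n ≤ 3 / c := tsum_g1_le hc hc1
  have h3c : (0:ℝ) ≤ 3 / c := by positivity
  calc (∑' n, g1 c n) * ((∑' n, g1 c n) * (∑' n, g1 c n))
      ≤ (3/c) * ((3/c) * (3/c)) := by
        apply mul_le_mul hA _ (mul_nonneg hA0 hA0) h3c
        exact mul_le_mul hA hA hA0 h3c
    _ = 27 / c ^ 3 := by field_simp; ring

/-! ### vectors -/

/-- integer point as a real vector -/
def v (x : Fin 3 → ℤ) : Fin 3 → ℝ := fun i => (x i : ℝ)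

lemma smul_v (t : ℝ) (x : Fin 3 → ℤ) : (fun i => t * ((x i : ℤ) : ℝ)) = t • v x := by
  funext i; simp [v]

lemma norm_v {η : ℝ} (hη : 0 < η) (x : Fin 3 → ℤ) : ‖v x‖ = ‖η • v x‖ / η := by
  rw [norm_smul, Real.norm_eq_abs, abs_of_pos hη]
  field_simp

/-- key pointwise bound: inverse power of `1 + ‖η • v x‖` dominates by the product weight -/
lemma inv_pow_le_wt {η : ℝ} (hη : 0 < η) (x : Fin 3 → ℤ) :
    ((1 + ‖η • v x‖) ^ 6)⁻¹ ≤ wt η x := by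
  have hr : 0 ≤ ‖η • v x‖ := norm_nonneg _
  have hfac : ∀ i : Fin 3, (0:ℝ) < 1 + η * |(x i : ℝ)| := by
    intro i; positivity
  have hprod : ∏ i : Fin 3, (1 + η * |(x i : ℝ)|) ^ 2 ≤ (1 + ‖η • v x‖) ^ 6 := by
    have hle : ∀ i : Fin 3, (1 + η * |(x i : ℝ)|) ^ 2 ≤ (1 + ‖η • v x‖) ^ 2 := by
      intro i
      have h1 : η * |(x i : ℝ)| ≤ ‖η • v x‖ := by
        have := norm_le_pi_norm (η • v x) i
        have he : (η • v x) i = η * (x i : ℝ) := rfl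
        rw [he, Real.norm_eq_abs, abs_mul, abs_of_pos hη] at this
        exact this
      have h2 : (0:ℝ) ≤ 1 + η * |(x i : ℝ)| := (hfac i).le
      apply pow_le_pow_left₀ h2
      linarith
    calc ∏ i : Fin 3, (1 + η * |(x i : ℝ)|) ^ 2
        ≤ ∏ _i : Fin 3, (1 + ‖η • v x‖) ^ 2 :=
          Finset.prod_le_prod (fun i _ => (pow_nonneg (hfac i).le 2)) (fun i _ => hle i)
      _ = ((1 + ‖η • v x‖) ^ 2) ^ 3 := by
          rw [Finset.prod_const]; norm_num
      _ = (1 + ‖η • v x‖) ^ 6 := by ring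
  have hwt : wt η x = (∏ i : Fin 3, (1 + η * |(x i : ℝ)|) ^ 2)⁻¹ := by
    unfold wt g1
    rw [← Finset.prod_inv_distrib]
  rw [hwt]
  exact inv_anti₀ (Finset.prod_pos (fun i _ => pow_pos (hfac i) 2)) hprod

/-! ### Schwartz bounds -/

lemma schwartz_decay_bound {F : Type*} [NormedAddCommGroup F] [NormedSpace ℝ F]
    (f : SchwartzMap (Fin 3 → ℝ) F) :
    ∃ M : ℝ, 0 ≤ M ∧ (∀ y, (1 + ‖y‖) ^ 7 * ‖f y‖ ≤ M) ∧
      (∀ y w, (1 + ‖y‖) ^ 7 * ‖fderiv ℝ f y w‖ ≤ M * ‖w‖) := by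
  refine ⟨2 ^ 7 * ((Finset.Iic ((7:ℕ),(1:ℕ))).sup fun m => SchwartzMap.seminorm ℝ m.1 m.2) f,
    ?_, ?_, ?_⟩
  · positivity
  · intro y
    have := SchwartzMap.one_add_le_sup_seminorm_apply (𝕜 := ℝ) (m := ((7:ℕ),(1:ℕ)))
      (k := 7) (n := 0) le_rfl (by norm_num) f y
    rwa [norm_iteratedFDeriv_zero] at this
  · intro y w
    have h1 := SchwartzMap.one_add_le_sup_seminorm_apply (𝕜 := ℝ) (m := ((7:ℕ),(1:ℕ)))
      (k := 7) (n := 1) le_rfl le_rfl f y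
    have h2 : ‖fderiv ℝ f y w‖ ≤ ‖iteratedFDeriv ℝ 1 (⇑f) y‖ * ‖w‖ := by
      have h3 := ContinuousMultilinearMap.le_opNorm (iteratedFDeriv ℝ 1 (⇑f) y) (fun _ => w)
      rw [iteratedFDeriv_one_apply] at h3
      simpa using h3
    have hy : (0:ℝ) ≤ (1 + ‖y‖) ^ 7 := by positivity
    calc (1 + ‖y‖) ^ 7 * ‖fderiv ℝ f y w‖
        ≤ (1 + ‖y‖) ^ 7 * (‖iteratedFDeriv ℝ 1 (⇑f) y‖ * ‖w‖) :=
          mul_le_mul_of_nonneg_left h2 hy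
      _ = ((1 + ‖y‖) ^ 7 * ‖iteratedFDeriv ℝ 1 (⇑f) y‖) * ‖w‖ := by ring
      _ ≤ _ := mul_le_mul_of_nonneg_right h1 (norm_nonneg _)


/-! ### the WKB functions -/

lemma norm_exp_aux (s t : ℝ) : ‖Complex.exp (Complex.I * (s : ℂ) / (t : ℂ))‖ = 1 := by
  rw [show Complex.I * (s:ℂ) / (t:ℂ) = ((s/t : ℝ) : ℂ) * Complex.I by push_cast; ring]
  rw [Complex.norm_exp_ofReal_mul_I]

lemma inv_pow7_le_wt {η : ℝ} (hη : 0 < η) (x : Fin 3 → ℤ) :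
    ((1 + ‖η • v x‖) ^ 7)⁻¹ ≤ wt η x := by
  refine le_trans ?_ (inv_pow_le_wt hη x)
  apply inv_anti₀ (by positivity)
  apply pow_le_pow_right₀ (by linarith [norm_nonneg (η • v x)])
  norm_num

variable (h : SchwartzMap (Fin 3 → ℝ) ℂ) (S : SchwartzMap (Fin 3 → ℝ) ℝ)

/-- the WKB wave function values -/
def fval (η : ℝ) (x : Fin 3 → ℤ) : ℂ :=
  ((η ^ ((3 : ℝ) / 2) : ℝ) : ℂ) * h (fun i => η * (x i : ℝ)) *
    Complex.exp (Complex.I * ((S (fun i => η * (x i : ℝ)) : ℝ) : ℂ) / (η : ℂ))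

/-- its η-derivative -/
def dval (η : ℝ) (x : Fin 3 → ℤ) : ℂ :=
  ((((3:ℝ)/2 * η ^ ((3:ℝ)/2 - 1) : ℝ) : ℂ) * h (η • v x)
      + ((η ^ ((3:ℝ)/2) : ℝ) : ℂ) * (fderiv ℝ h (η • v x) (v x))) *
    Complex.exp (Complex.I * ((S (η • v x) : ℝ) : ℂ) / (η : ℂ))
  + ((η ^ ((3:ℝ)/2) : ℝ) : ℂ) * h (η • v x) *
    (Complex.exp (Complex.I * ((S (η • v x) : ℝ) : ℂ) / (η : ℂ)) *
      ((Complex.I * ((fderiv ℝ S (η • v x) (v x) : ℝ) : ℂ) * (η:ℂ)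
          - Complex.I * ((S (η • v x) : ℝ) : ℂ) * 1) / (η:ℂ) ^ 2))

lemma hasDerivAt_fval (x : Fin 3 → ℤ) {η : ℝ} (hη : 0 < η) :
    HasDerivAt (fun t => fval h S t x) (dval h S η x) η := by
  have hv : ∀ t : ℝ, (fun i => t * ((x i : ℤ) : ℝ)) = t • v x := fun t => smul_v t x
  simp only [fval, hv]
  have hA : HasDerivAt (fun t : ℝ => ((t ^ ((3:ℝ)/2) : ℝ) : ℂ))
      ((((3:ℝ)/2 * η ^ ((3:ℝ)/2 - 1) : ℝ)) : ℂ) η :=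
    (Real.hasDerivAt_rpow_const (Or.inl hη.ne')).ofReal_comp
  have hsmul : HasDerivAt (fun t : ℝ => t • v x) (v x) η := by
    simpa using (hasDerivAt_id η).smul_const (v x)
  have hBh : HasDerivAt (fun t : ℝ => h (t • v x)) (fderiv ℝ h (η • v x) (v x)) η :=
    (h.differentiableAt.hasFDerivAt).comp_hasDerivAt η hsmul
  have hBS : HasDerivAt (fun t : ℝ => S (t • v x)) (fderiv ℝ S (η • v x) (v x)) η :=
    (S.differentiableAt.hasFDerivAt).comp_hasDerivAt η hsmul
  have hnum : HasDerivAt (fun t : ℝ => Complex.I * ((S (t • v x) : ℝ) : ℂ))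
      (Complex.I * ((fderiv ℝ S (η • v x) (v x) : ℝ) : ℂ)) η :=
    (hBS.ofReal_comp).const_mul Complex.I
  have hden : HasDerivAt (fun t : ℝ => (t : ℂ)) 1 η := by
    simpa using (hasDerivAt_id η).ofReal_comp
  have hw := hnum.div hden (by exact_mod_cast hη.ne')
  have hE := hw.cexp
  exact (hA.mul hBh).mul hE

lemma exists_fval_bound : ∃ M : ℝ, 0 ≤ M ∧ ∀ (η : ℝ) (x : Fin 3 → ℤ), 0 < η →
    ‖fval h S η x‖ ≤ M * η ^ ((3:ℝ)/2) * wt η x := by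
  obtain ⟨M, hM0, hM1, -⟩ := schwartz_decay_bound h
  refine ⟨M, hM0, ?_⟩
  intro η x hη
  have hv := smul_v η x
  set y := η • v x with hy
  have hr : (0:ℝ) ≤ ‖y‖ := norm_nonneg _
  have h1p : (0:ℝ) < 1 + ‖y‖ := by linarith
  have hq0 : (0:ℝ) < η ^ ((3:ℝ)/2) := rpow_pos_of_pos hη _
  have hnorm : ‖fval h S η x‖ = η ^ ((3:ℝ)/2) * ‖h y‖ := by
    unfold fval
    rw [hv, norm_mul, norm_mul, norm_exp_aux, mul_one, Complex.norm_real,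
      Real.norm_eq_abs, abs_of_pos hq0]
  rw [hnorm]
  have hP : ‖h y‖ ≤ M * ((1 + ‖y‖) ^ 7)⁻¹ := by
    rw [mul_comm M, ← div_eq_inv_mul, le_div_iff₀ (by positivity)]
    calc ‖h y‖ * (1 + ‖y‖) ^ 7 = (1 + ‖y‖) ^ 7 * ‖h y‖ := mul_comm _ _
      _ ≤ M := hM1 y
  have hb : ‖h y‖ ≤ M * wt η x :=
    le_trans hP (mul_le_mul_of_nonneg_left (inv_pow7_le_wt hη x) hM0)
  calc η ^ ((3:ℝ)/2) * ‖h y‖ ≤ η ^ ((3:ℝ)/2) * (M * wt η x) :=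
        mul_le_mul_of_nonneg_left hb hq0.le
    _ = M * η ^ ((3:ℝ)/2) * wt η x := by ring

set_option maxHeartbeats 1000000 in
lemma exists_dval_bound : ∃ K : ℝ, 0 ≤ K ∧ ∀ (η : ℝ) (x : Fin 3 → ℤ), 0 < η → η ≤ 2 →
    ‖dval h S η x‖ ≤ K * (η ^ ((3:ℝ)/2) / η ^ 2) * wt η x := by
  obtain ⟨Mh, hMh0, hMh1, hMh2⟩ := schwartz_decay_bound h
  obtain ⟨MS, hMS0, hMS1, hMS2⟩ := schwartz_decay_bound S
  refine ⟨Mh * (5 + MS), by positivity, ?_⟩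
  intro η x hη hη2
  set y := η • v x with hy
  set r := ‖y‖ with hrdef
  have hr : (0:ℝ) ≤ r := norm_nonneg _
  have h1p : (0:ℝ) < 1 + r := by linarith
  set q := η ^ ((3:ℝ)/2) with hq
  have hq0 : (0:ℝ) < q := rpow_pos_of_pos hη _
  have hq1 : η ^ ((3:ℝ)/2 - 1) = q / η := by
    rw [hq, Real.rpow_sub hη, Real.rpow_one]
  have h17 : (1:ℝ) ≤ (1 + r) ^ 7 := one_le_pow₀ (by linarith)
  set P : ℝ := ((1 + r) ^ 7)⁻¹ with hP
  have hP0 : (0:ℝ) < P := by positivity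
  have hvn : ‖v x‖ = r / η := norm_v hη x
  -- Schwartz-type bounds
  have ehy : ‖h y‖ ≤ Mh * P := by
    rw [hP, mul_comm Mh, ← div_eq_inv_mul, le_div_iff₀ (by positivity)]
    calc ‖h y‖ * (1 + r) ^ 7 = (1 + r) ^ 7 * ‖h y‖ := mul_comm _ _
      _ ≤ Mh := hMh1 y
  have ehd : ‖fderiv ℝ h y (v x)‖ ≤ Mh * P * (r / η) := by
    have h7 := hMh2 y (v x)
    rw [hvn] at h7
    have step : ‖fderiv ℝ h y (v x)‖ * (1 + r) ^ 7 ≤ Mh * (r/η) := by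
      calc ‖fderiv ℝ h y (v x)‖ * (1 + r) ^ 7
          = (1 + r) ^ 7 * ‖fderiv ℝ h y (v x)‖ := mul_comm _ _
        _ ≤ Mh * (r/η) := h7
    calc ‖fderiv ℝ h y (v x)‖ = ‖fderiv ℝ h y (v x)‖ * ((1 + r) ^ 7 * P) := by
          rw [hP, mul_inv_cancel₀ (by positivity), mul_one]
      _ = (‖fderiv ℝ h y (v x)‖ * (1 + r) ^ 7) * P := by ring
      _ ≤ (Mh * (r/η)) * P := mul_le_mul_of_nonneg_right step hP0.le
      _ = Mh * P * (r/η) := by ring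
  have eS : ‖S y‖ ≤ MS := by
    have h7 := hMS1 y
    nlinarith [norm_nonneg (S y)]
  have eSd : ‖fderiv ℝ S y (v x)‖ ≤ MS * (r / η) := by
    have h7 := hMS2 y (v x)
    rw [hvn] at h7
    nlinarith [norm_nonneg (fderiv ℝ S y (v x))]
  -- norm of the phase-derivative factor
  have hWnorm : ‖(Complex.I * ((fderiv ℝ S y (v x) : ℝ) : ℂ) * (η:ℂ)
      - Complex.I * ((S y : ℝ) : ℂ) * 1) / (η:ℂ) ^ 2‖
      ≤ (‖fderiv ℝ S y (v x)‖ * η + ‖S y‖) / η ^ 2 := by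
    rw [norm_div]
    have hden : ‖((η:ℂ)) ^ 2‖ = η ^ 2 := by
      rw [norm_pow, Complex.norm_real, Real.norm_eq_abs, abs_of_pos hη]
    rw [hden]
    apply div_le_div_of_nonneg_right ?_ (by positivity : (0:ℝ) ≤ η ^ 2)
    calc ‖Complex.I * ((fderiv ℝ S y (v x) : ℝ) : ℂ) * (η:ℂ)
          - Complex.I * ((S y : ℝ) : ℂ) * 1‖
        ≤ ‖Complex.I * ((fderiv ℝ S y (v x) : ℝ) : ℂ) * (η:ℂ)‖
          + ‖Complex.I * ((S y : ℝ) : ℂ) * 1‖ := norm_sub_le _ _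
      _ = ‖fderiv ℝ S y (v x)‖ * η + ‖S y‖ := by
          simp [norm_mul, Complex.norm_I, Complex.norm_real, Real.norm_eq_abs, abs_of_pos hη]
  -- first decomposition
  have step0 : ‖dval h S η x‖ ≤
      ((3:ℝ)/2 * (q/η) * ‖h y‖ + q * ‖fderiv ℝ h y (v x)‖)
        + q * ‖h y‖ * ((‖fderiv ℝ S y (v x)‖ * η + ‖S y‖) / η ^ 2) := by
    unfold dval
    rw [← hy, ← hq]
    refine le_trans (norm_add_le _ _) (add_le_add ?_ ?_)
    · rw [norm_mul, norm_exp_aux, mul_one]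
      refine le_trans (norm_add_le _ _) (add_le_add ?_ ?_)
      · rw [norm_mul, Complex.norm_real, Real.norm_eq_abs, abs_of_pos (by
          rw [hq1]; positivity), hq1]
      · rw [norm_mul, Complex.norm_real, Real.norm_eq_abs, abs_of_pos hq0]
    · rw [norm_mul, norm_mul, norm_mul, norm_exp_aux, one_mul, Complex.norm_real,
        Real.norm_eq_abs, abs_of_pos hq0]
      exact mul_le_mul_of_nonneg_left hWnorm (by positivity)
  -- term-by-term bounds
  have hterm1 : (3:ℝ)/2 * (q/η) * ‖h y‖ ≤ (q/η^2) * (3 * (Mh * P)) := by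
    have he : (3:ℝ)/2 * (q/η) = (q/η^2) * ((3:ℝ)/2 * η) := by
      field_simp
    rw [he, mul_assoc]
    apply mul_le_mul_of_nonneg_left ?_ (by positivity)
    calc (3:ℝ)/2 * η * ‖h y‖ ≤ (3:ℝ)/2 * 2 * (Mh * P) := by
          apply mul_le_mul (by nlinarith) ehy (norm_nonneg _) (by norm_num)
      _ = 3 * (Mh * P) := by norm_num
  have hterm2 : q * ‖fderiv ℝ h y (v x)‖ ≤ (q/η^2) * (2 * (Mh * P) * r) := by
    have he : q * (Mh * P * (r/η)) = (q/η^2) * (Mh * P * r * η) := by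
      field_simp
    calc q * ‖fderiv ℝ h y (v x)‖ ≤ q * (Mh * P * (r/η)) :=
          mul_le_mul_of_nonneg_left ehd hq0.le
      _ = (q/η^2) * (Mh * P * r * η) := he
      _ ≤ (q/η^2) * (2 * (Mh * P) * r) := by
          apply mul_le_mul_of_nonneg_left ?_ (by positivity)
          nlinarith [mul_nonneg (mul_nonneg hMh0 hP0.le) hr]
  have hterm3 : q * ‖h y‖ * ((‖fderiv ℝ S y (v x)‖ * η + ‖S y‖) / η ^ 2)
      ≤ (q/η^2) * (Mh * P * (MS * (r + 1))) := by
    have hnum2 : ‖fderiv ℝ S y (v x)‖ * η + ‖S y‖ ≤ MS * (r + 1) := by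
      have h1 : ‖fderiv ℝ S y (v x)‖ * η ≤ MS * r := by
        calc ‖fderiv ℝ S y (v x)‖ * η ≤ (MS * (r/η)) * η :=
              mul_le_mul_of_nonneg_right eSd hη.le
          _ = MS * r := by field_simp
      nlinarith [eS]
    calc q * ‖h y‖ * ((‖fderiv ℝ S y (v x)‖ * η + ‖S y‖) / η ^ 2)
        ≤ q * (Mh * P) * ((MS * (r + 1)) / η ^ 2) := by
          apply mul_le_mul
          · exact mul_le_mul_of_nonneg_left ehy hq0.le
          · exact div_le_div_of_nonneg_right hnum2 (by positivity)
          · positivity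
          · positivity
      _ = (q/η^2) * (Mh * P * (MS * (r + 1))) := by
          field_simp
  -- combine
  have hPr : P * (1 + r) = ((1 + r) ^ 6)⁻¹ := by
    have h76 : (1 + r) ^ 7 = (1 + r) ^ 6 * (1 + r) := by ring
    rw [hP, h76, mul_inv, mul_assoc, inv_mul_cancel₀ h1p.ne', mul_one]
  have hbr : (q/η^2) * (3 * (Mh * P)) + (q/η^2) * (2 * (Mh * P) * r)
      + (q/η^2) * (Mh * P * (MS * (r + 1)))
      ≤ (q/η^2) * (Mh * (5 + MS) * (P * (1 + r))) := by
    rw [← mul_add, ← mul_add]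
    apply mul_le_mul_of_nonneg_left ?_ (by positivity)
    nlinarith [mul_nonneg (mul_nonneg hMh0 hP0.le) hr, mul_nonneg hMh0 hP0.le,
      mul_nonneg (mul_nonneg (mul_nonneg hMh0 hP0.le) hr) hMS0,
      mul_nonneg (mul_nonneg hMh0 hP0.le) hMS0]
  have hwt : (q/η^2) * (Mh * (5 + MS) * (P * (1 + r)))
      ≤ Mh * (5 + MS) * (q/η^2) * wt η x := by
    rw [hPr]
    calc (q/η^2) * (Mh * (5 + MS) * ((1 + r) ^ 6)⁻¹)
        ≤ (q/η^2) * (Mh * (5 + MS) * wt η x) := by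
          apply mul_le_mul_of_nonneg_left ?_ (by positivity)
          apply mul_le_mul_of_nonneg_left ?_ (by positivity)
          rw [hrdef, hy]
          exact inv_pow_le_wt hη x
      _ = Mh * (5 + MS) * (q/η^2) * wt η x := by ring
  calc ‖dval h S η x‖
      ≤ ((3:ℝ)/2 * (q/η) * ‖h y‖ + q * ‖fderiv ℝ h y (v x)‖)
        + q * ‖h y‖ * ((‖fderiv ℝ S y (v x)‖ * η + ‖S y‖) / η ^ 2) := step0
    _ ≤ ((q/η^2) * (3 * (Mh * P)) + (q/η^2) * (2 * (Mh * P) * r))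
        + (q/η^2) * (Mh * P * (MS * (r + 1))) :=
          add_le_add (add_le_add hterm1 hterm2) hterm3
    _ ≤ (q/η^2) * (Mh * (5 + MS) * (P * (1 + r))) := hbr
    _ ≤ Mh * (5 + MS) * (q/η^2) * wt η x := hwt

/-! ### lp machinery -/

lemma two_toReal : (2 : ENNReal).toReal = 2 := by simp

lemma two_toReal_pos : (0:ℝ) < (2 : ENNReal).toReal := by rw [two_toReal]; norm_num

/-- `lp.single` as a continuous linear map -/
def singleCLM (n : Fin 3 → ℤ) : ℂ →L[ℝ] lp (fun _ : Fin 3 → ℤ => ℂ) 2 :=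
  LinearMap.mkContinuous
    { toFun := fun a => lp.single 2 n a
      map_add' := fun a b => by
        apply lp.ext
        funext j
        by_cases hj : j = n
        · subst hj
          simp [lp.single_apply_self]
        · simp [lp.single_apply_ne _ _ _ hj]
      map_smul' := fun c a => by
        simpa using lp.single_smul (E := fun _ : Fin 3 → ℤ => ℂ) 2 n c a }
    1 (fun a => by
      rw [one_mul]
      exact le_of_eq (lp.norm_single (E := fun _ : Fin 3 → ℤ => ℂ) (p := 2) (by norm_num) n a))

lemma norm_singleCLM (n : Fin 3 → ℤ) (a : ℂ) : ‖singleCLM n a‖ = ‖a‖ :=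
  lp.norm_single (E := fun _ : Fin 3 → ℤ => ℂ) (p := 2) (by norm_num) n a

lemma memℓp_two_of_le {f : (Fin 3 → ℤ) → ℂ} {G : (Fin 3 → ℤ) → ℝ} (hG : Summable G)
    (hle : ∀ n, ‖f n‖ ^ (2:ℕ) ≤ G n) : Memℓp f 2 := by
  apply memℓp_gen
  have h0 : Summable fun n => ‖f n‖ ^ (2:ℕ) :=
    hG.of_nonneg_of_le (fun n => by positivity) hle
  refine h0.congr fun n => ?_
  rw [two_toReal]
  exact (Real.rpow_two _).symm

lemma memℓp_of_wt_bound {f : (Fin 3 → ℤ) → ℂ} {A η : ℝ} (hη : 0 < η) (hA : 0 ≤ A)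
    (hb : ∀ n, ‖f n‖ ≤ A * wt η n) : Memℓp f 2 := by
  apply memℓp_two_of_le ((summable_wt hη).mul_left (A^2))
  intro n
  calc ‖f n‖ ^ 2 ≤ (A * wt η n) ^ 2 := pow_le_pow_left₀ (norm_nonneg _) (hb n) 2
    _ = A^2 * (wt η n)^2 := by ring
    _ ≤ A^2 * wt η n := by
        apply mul_le_mul_of_nonneg_left ?_ (by positivity)
        nlinarith [wt_le_one hη n, wt_nonneg hη n]

end

end WKBAux

set_option maxHeartbeats 2000000 in
theorem wkb_state_eta_derivative_bound
    (h : SchwartzMap (Fin 3 → ℝ) ℂ) (S : SchwartzMap (Fin 3 → ℝ) ℝ) :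
    ∃ C : ℝ, ∃ φ : ℝ → lp (fun _ : Fin 3 → ℤ => ℂ) 2,
      (∀ η : ℝ, 0 < η → ∀ x : Fin 3 → ℤ,
        φ η x = ((η ^ ((3 : ℝ) / 2) : ℝ) : ℂ) * h (fun i => η * (x i : ℝ)) *
          Complex.exp (Complex.I * ((S (fun i => η * (x i : ℝ)) : ℝ) : ℂ) / (η : ℂ))) ∧
      (∀ η : ℝ, 0 < η → η ≤ 1 →
        ∃ D : lp (fun _ : Fin 3 → ℤ => ℂ) 2, HasDerivAt φ D η ∧ ‖D‖ ≤ C / η ^ 2) := by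
  classical
  obtain ⟨M, hM0, hMf⟩ := WKBAux.exists_fval_bound h S
  obtain ⟨K, hK0, hKd⟩ := WKBAux.exists_dval_bound h S
  have memf : ∀ η : ℝ, 0 < η → Memℓp (WKBAux.fval h S η) 2 := fun η hη =>
    WKBAux.memℓp_of_wt_bound hη (by positivity) (fun n => hMf η n hη)
  set φ : ℝ → lp (fun _ : Fin 3 → ℤ => ℂ) 2 :=
    fun η => if hη : 0 < η then (⟨WKBAux.fval h S η, memf η hη⟩ :
        lp (fun _ : Fin 3 → ℤ => ℂ) 2) else 0 with hφ
  have hφval : ∀ η : ℝ, (hη : 0 < η) →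
      φ η = (⟨WKBAux.fval h S η, memf η hη⟩ : lp (fun _ : Fin 3 → ℤ => ℂ) 2) := by
    intro η hη
    rw [hφ]
    simp only [dif_pos hη]
  refine ⟨6 * K, φ, ?_, ?_⟩
  · intro η hη x
    rw [hφval η hη]
    rfl
  · intro η hη hη1
    set c : ℝ := η / 2 with hc
    have hc0 : 0 < c := by positivity
    have hcη : c < η := by rw [hc]; linarith
    have hc1 : c ≤ 1 := by rw [hc]; linarith
    have hmem : η ∈ Set.Ioo c 2 := ⟨hcη, by linarith⟩
    have memD : Memℓp (WKBAux.dval h S η) 2 :=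
      WKBAux.memℓp_of_wt_bound hη (by positivity)
        (fun n => hKd η n hη (by linarith))
    refine ⟨⟨WKBAux.dval h S η, memD⟩, ?_, ?_⟩
    · -- differentiability
      have hg : ∀ (n : Fin 3 → ℤ), ∀ t ∈ Set.Ioo c 2,
          HasDerivAt (fun z => WKBAux.singleCLM n (WKBAux.fval h S z n))
            (WKBAux.singleCLM n (WKBAux.dval h S t n)) t := by
        intro n t ht
        have htpos : 0 < t := lt_trans hc0 ht.1
        exact ((WKBAux.singleCLM n).hasFDerivAt).comp_hasDerivAt t
          (WKBAux.hasDerivAt_fval h S n htpos)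
      have hu : Summable (fun n => (4 * K / c^2) * WKBAux.wt c n) :=
        (WKBAux.summable_wt hc0).mul_left _
      have hg' : ∀ (n : Fin 3 → ℤ), ∀ t ∈ Set.Ioo c 2,
          ‖WKBAux.singleCLM n (WKBAux.dval h S t n)‖ ≤ (4 * K / c^2) * WKBAux.wt c n := by
        intro n t ht
        have htpos : 0 < t := lt_trans hc0 ht.1
        rw [WKBAux.norm_singleCLM]
        have ht4 : t ^ ((3:ℝ)/2) ≤ 4 := by
          calc t ^ ((3:ℝ)/2) ≤ 2 ^ ((3:ℝ)/2) :=
                Real.rpow_le_rpow htpos.le ht.2.le (by norm_num)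
            _ ≤ 2 ^ (2:ℝ) := Real.rpow_le_rpow_of_exponent_le one_le_two (by norm_num)
            _ = 4 := by
                rw [show (2:ℝ) = ((2:ℕ):ℝ) by norm_num]
                rw [Real.rpow_natCast]
                norm_num
        have hQ : t ^ ((3:ℝ)/2) / t^2 ≤ 4 / c^2 := by
          apply div_le_div₀ (by norm_num) ht4 (by positivity)
          exact pow_le_pow_left₀ hc0.le ht.1.le 2
        have hwle : WKBAux.wt t n ≤ WKBAux.wt c n := WKBAux.wt_anti hc0 ht.1.le n
        calc ‖WKBAux.dval h S t n‖
            ≤ K * (t ^ ((3:ℝ)/2) / t^2) * WKBAux.wt t n := hKd t n htpos ht.2.le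
          _ ≤ K * (4 / c^2) * WKBAux.wt c n := by
              apply mul_le_mul (mul_le_mul_of_nonneg_left hQ hK0) hwle
                (WKBAux.wt_nonneg htpos n) (by positivity)
          _ = (4 * K / c^2) * WKBAux.wt c n := by ring
      have hg0 : Summable (fun n => WKBAux.singleCLM n (WKBAux.fval h S η n)) := by
        have hs := (lp.hasSum_single (p := 2) (by simp)
          (⟨WKBAux.fval h S η, memf η hη⟩ : lp (fun _ : Fin 3 → ℤ => ℂ) 2)).summable
        exact hs.congr fun n => rfl
      have Hderiv := hasDerivAt_tsum_of_isPreconnected hu isOpen_Ioo isPreconnected_Ioo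
        hg hg' hmem hg0 hmem
      have hDsum : ∑' n, WKBAux.singleCLM n (WKBAux.dval h S η n)
          = (⟨WKBAux.dval h S η, memD⟩ : lp (fun _ : Fin 3 → ℤ => ℂ) 2) := by
        have hs := lp.hasSum_single (p := 2) (by simp)
          (⟨WKBAux.dval h S η, memD⟩ : lp (fun _ : Fin 3 → ℤ => ℂ) 2)
        have hs' : HasSum (fun n => WKBAux.singleCLM n (WKBAux.dval h S η n))
            (⟨WKBAux.dval h S η, memD⟩ : lp (fun _ : Fin 3 → ℤ => ℂ) 2) := by
          refine HasSum.congr_fun hs fun n => rfl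
        exact hs'.tsum_eq
      rw [hDsum] at Hderiv
      have hEq : (fun z => ∑' n, WKBAux.singleCLM n (WKBAux.fval h S z n)) =ᶠ[nhds η] φ := by
        filter_upwards [Ioi_mem_nhds hη] with t ht
        have hts := lp.hasSum_single (p := 2) (by simp)
          (⟨WKBAux.fval h S t, memf t ht⟩ : lp (fun _ : Fin 3 → ℤ => ℂ) 2)
        have hts' : HasSum (fun n => WKBAux.singleCLM n (WKBAux.fval h S t n))
            (⟨WKBAux.fval h S t, memf t ht⟩ : lp (fun _ : Fin 3 → ℤ => ℂ) 2) :=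
          HasSum.congr_fun hts fun n => rfl
        rw [hts'.tsum_eq, hφval t ht]
      exact Hderiv.congr_of_eventuallyEq hEq.symm
    · -- norm bound
      set D : lp (fun _ : Fin 3 → ℤ => ℂ) 2 := ⟨WKBAux.dval h S η, memD⟩ with hD
      set A : ℝ := K * (η ^ ((3:ℝ)/2) / η ^ 2) with hA
      have hA0 : 0 ≤ A := by positivity
      have hb : ∀ n, ‖D n‖ ≤ A * WKBAux.wt η n := fun n => hKd η n hη (by linarith)
      have hDnorm := lp.hasSum_norm WKBAux.two_toReal_pos D
      rw [WKBAux.two_toReal] at hDnorm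
      simp only [Real.rpow_two] at hDnorm
      have hb2 : ∀ n, ‖D n‖^2 ≤ A^2 * WKBAux.wt η n := by
        intro n
        calc ‖D n‖^2 ≤ (A * WKBAux.wt η n)^2 := pow_le_pow_left₀ (norm_nonneg _) (hb n) 2
          _ = A^2 * (WKBAux.wt η n)^2 := by ring
          _ ≤ A^2 * WKBAux.wt η n := by
              apply mul_le_mul_of_nonneg_left ?_ (by positivity)
              nlinarith [WKBAux.wt_le_one hη n, WKBAux.wt_nonneg hη n]
      have h1 : ∑' n, ‖D n‖^2 ≤ A^2 * (27/η^3) := by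
        calc ∑' n, ‖D n‖^2 ≤ ∑' n, A^2 * WKBAux.wt η n :=
              Summable.tsum_le_tsum hb2 hDnorm.summable ((WKBAux.summable_wt hη).mul_left _)
          _ = A^2 * ∑' n, WKBAux.wt η n := tsum_mul_left
          _ ≤ A^2 * (27/η^3) :=
              mul_le_mul_of_nonneg_left (WKBAux.tsum_wt_le hη hη1) (by positivity)
      have hq3 : (η ^ ((3:ℝ)/2))^(2:ℕ) = η^(3:ℕ) := by
        rw [← Real.rpow_natCast (η ^ ((3:ℝ)/2)) 2, ← Real.rpow_mul hη.le]
        rw [show ((3:ℝ)/2) * ((2:ℕ):ℝ) = ((3:ℕ):ℝ) by norm_num, Real.rpow_natCast]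
      have h2 : A^2 * (27/η^3) ≤ (6*K/η^2)^2 := by
        have e1 : A^2 * (27/η^3) = 27 * K^2 / η^4 := by
          rw [hA, mul_pow, div_pow, hq3]
          field_simp
        have e2 : (6*K/η^2)^2 = 36 * K^2 / η^4 := by
          rw [div_pow]
          ring_nf
        rw [e1, e2]
        apply div_le_div_of_nonneg_right ?_ (by positivity)
        nlinarith [sq_nonneg K]
      have hfin : ‖D‖^2 ≤ (6*K/η^2)^2 := by
        rw [← hDnorm.tsum_eq]
        exact le_trans h1 h2
      have h60 : (0:ℝ) ≤ 6*K/η^2 := by positivity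
      nlinarith [norm_nonneg D, hfin, h60]
end
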